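/- arXiv:1106.4325 — 6 statements merged into one kernel-verified Lean document; each statement's English description precedes it below -/
import Mathlib

section
/- In model M, the expected number of white balls after n draws is E(W_n) = (W_0/T_0)·(n·m·c + T_0) for every n ≥ 0. -/
open Finset

/-- Total number of balls after `n` draws: `T_n = W_0 + B_0 + n·m·c`. -/
def urnT (W0 B0 m c n : ℕ) : ℕ := W0 + B0 + n * m * c

/-- Probability mass function of the number of white balls after `n` draws in the
Chen–Wei model `M` (at each step `m` balls are drawn without replacement and, for
each drawn ball, `c` balls of the same color are added). -/
noncomputable def massM (W0 B0 m c : ℕ) : ℕ → ℕ → ℝ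
  | 0 => fun v => if v = W0 then 1 else 0
  | n + 1 => fun v =>
      ∑ w ∈ Finset.range (urnT W0 B0 m c n + 1), ∑ k ∈ Finset.range (m + 1),
        if v = w + c * k then
          massM W0 B0 m c n w *
            ((Nat.choose w k * Nat.choose (urnT W0 B0 m c n - w) (m - k) : ℝ) /
              (Nat.choose (urnT W0 B0 m c n) m : ℝ))
        else 0

/-- The `s`-th moment `E(W_n^s)` of the number of white balls in model `M`. -/
noncomputable def momM (W0 B0 m c s n : ℕ) : ℝ :=
  ∑ w ∈ Finset.range (urnT W0 B0 m c n + 1), massM W0 B0 m c n w * (w : ℝ) ^ s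

/-- Vandermonde's identity, range form. -/
lemma urn_vandermonde (a b n : ℕ) :
    ∑ k ∈ Finset.range (n + 1), a.choose k * b.choose (n - k) = (a + b).choose n := by
  rw [Nat.add_choose_eq, Finset.Nat.sum_antidiagonal_eq_sum_range_succ_mk]

lemma urn_vand' (w T m : ℕ) (hw : w ≤ T) :
    ∑ k ∈ Finset.range (m + 1), w.choose k * (T - w).choose (m - k) = T.choose m := by
  rw [urn_vandermonde]; congr 1; omega

lemma urn_kvand (w T m : ℕ) (hw : w ≤ T) (hm : 1 ≤ m) :
    ∑ k ∈ Finset.range (m + 1), k * (w.choose k * (T - w).choose (m - k)) =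
      w * (T - 1).choose (m - 1) := by
  cases w with
  | zero =>
      rw [Finset.sum_eq_zero]
      · simp
      · intro k hk
        rcases Nat.eq_zero_or_pos k with h | h
        · simp [h]
        · rw [Nat.choose_eq_zero_of_lt h]; ring
  | succ w' =>
      rw [Finset.sum_range_succ']
      have h1 : ∀ j, (j + 1) * ((w' + 1).choose (j + 1) * (T - (w' + 1)).choose (m - (j + 1)))
          = (w' + 1) * (w'.choose j * (T - 1 - w').choose (m - 1 - j)) := by
        intro j
        have h2 : (w' + 1) * w'.choose j = (w' + 1).choose (j + 1) * (j + 1) :=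
          Nat.add_one_mul_choose_eq w' j
        have h3 : T - (w' + 1) = T - 1 - w' := by omega
        have h4 : m - (j + 1) = m - 1 - j := by omega
        rw [h3, h4]
        calc (j + 1) * ((w' + 1).choose (j + 1) * (T - 1 - w').choose (m - 1 - j))
            = ((w' + 1).choose (j + 1) * (j + 1)) * (T - 1 - w').choose (m - 1 - j) := by ring
          _ = ((w' + 1) * w'.choose j) * (T - 1 - w').choose (m - 1 - j) := by rw [h2]
          _ = (w' + 1) * (w'.choose j * (T - 1 - w').choose (m - 1 - j)) := by ring
      simp only [h1, Nat.zero_mul, Nat.add_zero, ← Finset.mul_sum]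
      congr 1
      obtain ⟨m', rfl⟩ : ∃ m', m = m' + 1 := ⟨m - 1, by omega⟩
      simp only [Nat.add_sub_cancel]
      rw [urn_vandermonde]
      congr 1
      omega

/-- `T·C(T-1,m-1) = m·C(T,m)` as a natural number identity. -/
lemma urn_aux (T m : ℕ) (hm : 1 ≤ m) (hmT : m ≤ T) :
    T * (T - 1).choose (m - 1) = m * T.choose m := by
  obtain ⟨T', rfl⟩ : ∃ T', T = T' + 1 := ⟨T - 1, by omega⟩
  obtain ⟨m', rfl⟩ : ∃ m', m = m' + 1 := ⟨m - 1, by omega⟩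
  simp only [Nat.add_sub_cancel]
  rw [Nat.add_one_mul_choose_eq]
  exact Nat.mul_comm _ _

/-- Expected value of one drawing step, given `w` white balls among `T`. -/
lemma urn_rowSum (w T m c : ℕ) (hw : w ≤ T) (hm : 1 ≤ m) (hmT : m ≤ T) :
    ∑ k ∈ Finset.range (m + 1),
        ((w : ℝ) + c * k) * ((w.choose k * (T - w).choose (m - k) : ℝ) / (T.choose m : ℝ))
      = w * ((T : ℝ) + c * m) / T := by
  have hT : 0 < T := lt_of_lt_of_le hm hmT
  have hTR : (T : ℝ) ≠ 0 := Nat.cast_ne_zero.mpr (by omega)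
  have hC : 0 < T.choose m := Nat.choose_pos hmT
  have hCR : (T.choose m : ℝ) ≠ 0 := Nat.cast_ne_zero.mpr (by omega)
  have h1 : ∑ k ∈ Finset.range (m + 1), (w.choose k * (T - w).choose (m - k) : ℝ)
      = (T.choose m : ℝ) := by exact_mod_cast urn_vand' w T m hw
  have h2 : ∑ k ∈ Finset.range (m + 1), (k : ℝ) * (w.choose k * (T - w).choose (m - k) : ℝ)
      = (w : ℝ) * ((T - 1).choose (m - 1) : ℝ) := by
    exact_mod_cast urn_kvand w T m hw hm
  have h3 : (T : ℝ) * ((T - 1).choose (m - 1) : ℝ) = (m : ℝ) * (T.choose m : ℝ) := by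
    exact_mod_cast urn_aux T m hm hmT
  have hsum : ∑ k ∈ Finset.range (m + 1),
      ((w : ℝ) + c * k) * ((w.choose k * (T - w).choose (m - k) : ℝ) / (T.choose m : ℝ))
      = ((w : ℝ) * (∑ k ∈ Finset.range (m + 1), (w.choose k * (T - w).choose (m - k) : ℝ))
          + c * (∑ k ∈ Finset.range (m + 1),
              (k : ℝ) * (w.choose k * (T - w).choose (m - k) : ℝ)))
          / (T.choose m : ℝ) := by
    rw [Finset.mul_sum, Finset.mul_sum, ← Finset.sum_add_distrib, Finset.sum_div]
    refine Finset.sum_congr rfl fun k _ => ?_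
    field_simp
  rw [hsum, h1, h2, div_eq_div_iff hCR hTR]
  linear_combination (c : ℝ) * (w : ℝ) * h3

/-- In model `M`, the expected number of white balls after `n` draws is
`E(W_n) = (W_0/T_0)·(n·m·c + T_0)`. -/
theorem modelM_expectation (W0 B0 m c : ℕ) (hm : 1 ≤ m) (hc : 1 ≤ c)
    (hW0 : 1 ≤ W0) (hB0 : 1 ≤ B0) (hT0 : m ≤ W0 + B0) :
    ∀ n : ℕ, momM W0 B0 m c 1 n =
      (W0 : ℝ) / ((W0 : ℝ) + (B0 : ℝ)) * ((n : ℝ) * m * c + ((W0 : ℝ) + (B0 : ℝ))) := by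
  have hT0R : (W0 : ℝ) + (B0 : ℝ) ≠ 0 := by positivity
  intro n
  induction n with
  | zero =>
      have hmem : W0 ∈ Finset.range (urnT W0 B0 m c 0 + 1) := by
        simp [urnT]
      simp only [momM, massM, ite_mul, one_mul, zero_mul, pow_one]
      rw [Finset.sum_ite_eq' _ W0 (fun w => (w : ℝ)), if_pos hmem]
      field_simp
      simp
  | succ n ih =>
      set T := urnT W0 B0 m c n with hT
      have hmT : m ≤ T := by simp [hT, urnT]; omega
      have hTpos : 0 < T := lt_of_lt_of_le hm hmT
      have hTR : (T : ℝ) ≠ 0 := Nat.cast_ne_zero.mpr (by omega)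
      have hstep : momM W0 B0 m c 1 (n + 1)
          = ((T : ℝ) + c * m) / T * momM W0 B0 m c 1 n := by
        have hT1 : urnT W0 B0 m c (n + 1) = T + m * c := by
          simp [hT, urnT]; ring
        calc momM W0 B0 m c 1 (n + 1)
            = ∑ v ∈ Finset.range (T + m * c + 1),
                ∑ w ∈ Finset.range (T + 1), ∑ k ∈ Finset.range (m + 1),
                  if v = w + c * k then
                    massM W0 B0 m c n w *
                      ((w.choose k * (T - w).choose (m - k) : ℝ) / (T.choose m : ℝ)) * v
                  else 0 := by
              simp only [momM, massM, pow_one, hT1, ← hT]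
              apply Finset.sum_congr rfl
              intro v _
              rw [Finset.sum_mul]
              apply Finset.sum_congr rfl
              intro w _
              rw [Finset.sum_mul]
              apply Finset.sum_congr rfl
              intro k _
              rw [ite_mul, zero_mul]
          _ = ∑ w ∈ Finset.range (T + 1), ∑ k ∈ Finset.range (m + 1),
                ∑ v ∈ Finset.range (T + m * c + 1),
                  if v = w + c * k then
                    massM W0 B0 m c n w *
                      ((w.choose k * (T - w).choose (m - k) : ℝ) / (T.choose m : ℝ)) * v
                  else 0 := by
              rw [Finset.sum_comm]
              apply Finset.sum_congr rfl
              intro w _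
              rw [Finset.sum_comm]
          _ = ∑ w ∈ Finset.range (T + 1), ∑ k ∈ Finset.range (m + 1),
                massM W0 B0 m c n w *
                  ((w.choose k * (T - w).choose (m - k) : ℝ) / (T.choose m : ℝ))
                  * ((w : ℝ) + c * k) := by
              apply Finset.sum_congr rfl
              intro w hw
              apply Finset.sum_congr rfl
              intro k hk
              have hwT : w ≤ T := by simpa [Nat.lt_succ_iff] using hw
              have hkm : k ≤ m := by simpa [Nat.lt_succ_iff] using hk
              have hmem : w + c * k ∈ Finset.range (T + m * c + 1) := by
                rw [Finset.mem_range, Nat.lt_succ_iff]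
                have h5 : c * k ≤ c * m := Nat.mul_le_mul_left c hkm
                have h6 : c * m = m * c := Nat.mul_comm c m
                omega
              rw [Finset.sum_ite_eq' _ (w + c * k)
                  (fun v => massM W0 B0 m c n w *
                    ((w.choose k * (T - w).choose (m - k) : ℝ) / (T.choose m : ℝ)) * v),
                if_pos hmem]
              push_cast
              ring
          _ = ∑ w ∈ Finset.range (T + 1),
                massM W0 B0 m c n w * ((w : ℝ) * ((T : ℝ) + c * m) / T) := by
              apply Finset.sum_congr rfl
              intro w hw
              have hwT : w ≤ T := by simpa [Nat.lt_succ_iff] using hw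
              rw [← urn_rowSum w T m c hwT hm hmT, Finset.mul_sum]
              apply Finset.sum_congr rfl
              intro k _
              ring
          _ = ((T : ℝ) + c * m) / T * momM W0 B0 m c 1 n := by
              simp only [momM, pow_one, ← hT, Finset.mul_sum]
              apply Finset.sum_congr rfl
              intro w _
              ring
      rw [hstep, ih]
      have hTcast : (T : ℝ) = (W0 : ℝ) + (B0 : ℝ) + (n : ℝ) * m * c := by
        simp only [hT, urnT]; push_cast; ring
      rw [hTcast]
      push_cast
      field_simp
      ring
end

section
/- In model M, the second moment of the number of white balls after n draws is E(W_n²) = [C(n−1+λ_1, n)·C(n−1+λ_2, n) / (C(n−1+T_0/(mc), n)·C(n−1+(T_0−1)/(mc), n))] · ( W_0² + (W_0·c²·m/T_0) · Σ_{ℓ=0}^{n−1} [(ℓ+(T_0−m)/(mc))/(ℓ+(T_0−1)/(mc))] · [C(ℓ+T_0/(mc), ℓ+1)·C(ℓ+(T_0−1)/(mc), ℓ+1) / (C(ℓ+λ_1, ℓ+1)·C(ℓ+λ_2, ℓ+1))] ), where C(x, n) denotes the generalized binomial coefficient for real x; in particular this determines the variance V(W_n) = E(W_n²) − E(W_n)².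 -/
open Finset

/-- Generalized binomial coefficient `C(x,n) = x(x-1)⋯(x-n+1)/n!` for real `x`. -/
noncomputable def gchoose (x : ℝ) (n : ℕ) : ℝ :=
  (∏ i ∈ Finset.range n, (x - (i : ℝ))) / (Nat.factorial n : ℝ)



lemma vand (a b M : ℕ) :
    ∑ k ∈ range (M+1), a.choose k * b.choose (M-k) = (a+b).choose M := by
  rw [Nat.add_choose_eq, Finset.Nat.sum_antidiagonal_eq_sum_range_succ_mk]

lemma succ_choose (n k : ℕ) : (n+1) * n.choose k = (n+1).choose (k+1) * (k+1) := by
  simpa [Nat.succ_eq_add_one] using Nat.add_one_mul_choose_eq n k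

lemma vand1 (a b M : ℕ) :
    (a+b) * ∑ k ∈ range (M+1), k * (a.choose k * b.choose (M-k))
      = a * M * (a+b).choose M := by
  cases M with
  | zero => simp
  | succ M' =>
    rw [Finset.sum_range_succ']
    simp only [Nat.zero_mul, Nat.add_zero, Nat.succ_sub_succ]
    cases a with
    | zero => simp
    | succ a' =>
      have h1 : ∀ j, (j+1) * ((a'+1).choose (j+1) * b.choose (M'-j))
          = (a'+1) * (a'.choose j * b.choose (M'-j)) := by
        intro j
        rw [← Nat.mul_assoc, ← Nat.mul_assoc, Nat.mul_comm (j+1), succ_choose]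
      rw [Finset.sum_congr rfl (fun j _ => h1 j), ← Finset.mul_sum, vand]
      have h2 := succ_choose (a'+b) M'
      have h3 : a'+1+b = a'+b+1 := by omega
      rw [h3]
      calc (a'+b+1) * ((a'+1) * (a'+b).choose M')
          = (a'+1) * ((a'+b+1) * (a'+b).choose M') := by ring
        _ = (a'+1) * ((a'+b+1).choose (M'+1) * (M'+1)) := by rw [h2]
        _ = (a'+1) * (M'+1) * (a'+b+1).choose (M'+1) := by ring

lemma vand2 (a b M : ℕ) :
    (a+b) * ((a+b)-1) * ∑ k ∈ range (M+1), k * (k-1) * (a.choose k * b.choose (M-k))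
      = a * (a-1) * (M * (M-1)) * (a+b).choose M := by
  match M with
  | 0 => simp
  | 1 =>
    rw [Finset.sum_range_succ, Finset.sum_range_one]
    simp
  | (M''+2) =>
    rw [Finset.sum_range_succ', Finset.sum_range_succ']
    simp only [Nat.zero_mul, Nat.mul_zero, Nat.add_zero, Nat.succ_sub_succ, Nat.sub_zero,
      Nat.sub_self, Nat.one_mul, Nat.mul_one, Nat.zero_add, Nat.add_sub_cancel]
    match a with
    | 0 => simp
    | 1 =>
      have h0 : ∀ j ∈ range (M''+1),
          (j+1+1) * (j+1) * (Nat.choose 1 (j+1+1) * b.choose (M''-j)) = 0 := by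
        intro j _
        have : Nat.choose 1 (j+2) = 0 := Nat.choose_eq_zero_of_lt (by omega)
        simp [this]
      rw [Finset.sum_congr rfl h0]
      simp
    | (a''+2) =>
      have h1 : ∀ j, (j+1+1) * (j+1) * ((a''+2).choose (j+1+1) * b.choose (M''-j))
          = (a''+2) * (a''+1) * (a''.choose j * b.choose (M''-j)) := by
        intro j
        have e1 := succ_choose (a''+1) (j+1)
        have e2 := succ_choose a'' j
        calc (j+1+1) * (j+1) * ((a''+2).choose (j+1+1) * b.choose (M''-j))
            = ((a''+2).choose (j+2) * (j+2)) * (j+1) * b.choose (M''-j) := by ring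
          _ = ((a''+2) * (a''+1).choose (j+1)) * (j+1) * b.choose (M''-j) := by rw [← e1]
          _ = (a''+2) * ((a''+1).choose (j+1) * (j+1)) * b.choose (M''-j) := by ring
          _ = (a''+2) * ((a''+1) * a''.choose j) * b.choose (M''-j) := by rw [← e2]
          _ = (a''+2) * (a''+1) * (a''.choose j * b.choose (M''-j)) := by ring
      rw [Finset.sum_congr rfl (fun j _ => h1 j), ← Finset.mul_sum, vand]
      have h3 : a''+2+b = a''+b+2 := by omega
      have h4 : a''+b+2-1 = a''+b+1 := by omega
      rw [h3, h4]
      have e3 := succ_choose (a''+b) M''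
      have e4 := succ_choose (a''+b+1) (M''+1)
      calc (a''+b+2) * (a''+b+1) * ((a''+2) * (a''+1) * (a''+b).choose M'')
          = (a''+2) * (a''+1) * ((a''+b+2) * ((a''+b+1) * (a''+b).choose M'')) := by ring
        _ = (a''+2) * (a''+1) * ((a''+b+2) * ((a''+b+1).choose (M''+1) * (M''+1))) := by rw [e3]
        _ = (a''+2) * (a''+1) * (((a''+b+2) * (a''+b+1).choose (M''+1)) * (M''+1)) := by ring
        _ = (a''+2) * (a''+1) * (((a''+b+2).choose (M''+2) * (M''+2)) * (M''+1)) := by rw [e4]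
        _ = (a''+2) * (a''+1) * ((M''+2) * (M''+1)) * (a''+b+2).choose (M''+2) := by ring

lemma cast_pred_mul (k : ℕ) : ((k:ℝ)) * ((k:ℝ)-1) = ((k*(k-1) : ℕ) : ℝ) := by
  cases k with
  | zero => simp
  | succ k' => push_cast [Nat.succ_sub_one]; ring

lemma sumA (w T M : ℕ) (hw : w ≤ T) (hM : M ≤ T) :
    ∑ k ∈ range (M+1), ((w.choose k : ℝ) * ((T-w).choose (M-k) : ℝ) / (T.choose M : ℝ)) = 1 := by
  have hC : (T.choose M : ℝ) ≠ 0 := by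
    exact_mod_cast (Nat.choose_pos hM).ne'
  rw [← Finset.sum_div]
  rw [div_eq_one_iff_eq hC]
  have h := vand w (T-w) M
  rw [Nat.add_sub_cancel' hw] at h
  exact_mod_cast h

lemma sumB (w T M : ℕ) (hw : w ≤ T) (hM : M ≤ T) (hT : 1 ≤ T) :
    ∑ k ∈ range (M+1), (k:ℝ) * ((w.choose k : ℝ) * ((T-w).choose (M-k) : ℝ) / (T.choose M : ℝ))
      = (M:ℝ) * w / T := by
  have hC : (T.choose M : ℝ) ≠ 0 := by exact_mod_cast (Nat.choose_pos hM).ne'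
  have hT' : (T:ℝ) ≠ 0 := by positivity
  have h := vand1 w (T-w) M
  rw [Nat.add_sub_cancel' hw] at h
  have h' : (T:ℝ) * ∑ k ∈ range (M+1), (k:ℝ) * ((w.choose k : ℝ) * ((T-w).choose (M-k) : ℝ))
      = (w:ℝ) * M * (T.choose M : ℝ) := by exact_mod_cast h
  have hsplit : ∑ k ∈ range (M+1), (k:ℝ) * ((w.choose k : ℝ) * ((T-w).choose (M-k) : ℝ) / (T.choose M : ℝ))
      = (∑ k ∈ range (M+1), (k:ℝ) * ((w.choose k : ℝ) * ((T-w).choose (M-k) : ℝ))) / (T.choose M : ℝ) := by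
    rw [Finset.sum_div]
    exact Finset.sum_congr rfl (fun k _ => by ring)
  rw [hsplit]
  rw [div_eq_div_iff hC hT']
  linarith [h']

lemma sumC (w T M : ℕ) (hw : w ≤ T) (hM : M ≤ T) (hT : 2 ≤ T) :
    ∑ k ∈ range (M+1), (k:ℝ) * ((k:ℝ)-1) *
        ((w.choose k : ℝ) * ((T-w).choose (M-k) : ℝ) / (T.choose M : ℝ))
      = (M:ℝ) * ((M:ℝ)-1) * w * ((w:ℝ)-1) / ((T:ℝ) * ((T:ℝ)-1)) := by
  have hC : (T.choose M : ℝ) ≠ 0 := by exact_mod_cast (Nat.choose_pos hM).ne'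
  have hT0 : (T:ℝ) ≠ 0 := by positivity
  have hT1 : (T:ℝ) - 1 ≠ 0 := by
    have : (2:ℝ) ≤ (T:ℝ) := by exact_mod_cast hT
    linarith
  have h := vand2 w (T-w) M
  rw [Nat.add_sub_cancel' hw] at h
  have hcast : ((T * (T-1) * ∑ k ∈ range (M+1), k * (k-1) * (w.choose k * (T-w).choose (M-k)) : ℕ) : ℝ)
      = (T:ℝ) * ((T:ℝ)-1) * ∑ k ∈ range (M+1), (k:ℝ) * ((k:ℝ)-1) *
          ((w.choose k : ℝ) * ((T-w).choose (M-k) : ℝ)) := by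
    push_cast [Nat.cast_sub (show 1 ≤ T by omega)]
    rw [Finset.mul_sum, Finset.mul_sum]
    refine Finset.sum_congr rfl (fun k _ => ?_)
    cases k with
    | zero => simp
    | succ k' => push_cast [Nat.succ_sub_one]; ring
  have hcast2 : ((w * (w-1) * (M * (M-1)) * (T.choose M) : ℕ) : ℝ)
      = (w:ℝ) * ((w:ℝ)-1) * ((M:ℝ) * ((M:ℝ)-1)) * (T.choose M : ℝ) := by
    rw [cast_pred_mul w, cast_pred_mul M]
    push_cast
    ring
  have h' := congrArg (fun x : ℕ => (x : ℝ)) h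
  try simp only at h'
  rw [hcast, hcast2] at h'
  have hsplit : ∑ k ∈ range (M+1), (k:ℝ) * ((k:ℝ)-1) *
        ((w.choose k : ℝ) * ((T-w).choose (M-k) : ℝ) / (T.choose M : ℝ))
      = (∑ k ∈ range (M+1), (k:ℝ) * ((k:ℝ)-1) * ((w.choose k : ℝ) * ((T-w).choose (M-k) : ℝ))) / (T.choose M : ℝ) := by
    rw [Finset.sum_div]
    exact Finset.sum_congr rfl (fun k _ => by ring)
  rw [hsplit]
  field_simp
  simp only [mul_assoc] at h' ⊢
  linarith [h']

lemma step1 (c w T M : ℕ) (hw : w ≤ T) (hM : M ≤ T) (hT : 2 ≤ T) :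
    ∑ k ∈ range (M+1), ((w.choose k : ℝ) * ((T-w).choose (M-k) : ℝ) / (T.choose M : ℝ))
        * ((w:ℝ) + c*k) ^ 1
      = (((T:ℝ) + c*M)/T) * w := by
  have hT0 : (T:ℝ) ≠ 0 := by positivity
  have h1 : ∑ k ∈ range (M+1), ((w.choose k : ℝ) * ((T-w).choose (M-k) : ℝ) / (T.choose M : ℝ))
        * ((w:ℝ) + c*k) ^ 1
      = ∑ k ∈ range (M+1), ((w:ℝ) * ((w.choose k : ℝ) * ((T-w).choose (M-k) : ℝ) / (T.choose M : ℝ))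
        + (c:ℝ) * ((k:ℝ) * ((w.choose k : ℝ) * ((T-w).choose (M-k) : ℝ) / (T.choose M : ℝ)))) :=
    Finset.sum_congr rfl (fun k _ => by ring)
  rw [h1, Finset.sum_add_distrib, ← Finset.mul_sum, ← Finset.mul_sum,
    sumA w T M hw hM, sumB w T M hw hM (by omega)]
  field_simp

lemma step2 (c w T M : ℕ) (hw : w ≤ T) (hM : M ≤ T) (hT : 2 ≤ T) :
    ∑ k ∈ range (M+1), ((w.choose k : ℝ) * ((T-w).choose (M-k) : ℝ) / (T.choose M : ℝ))
        * ((w:ℝ) + c*k) ^ 2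
      = (1 + 2*(c:ℝ)*M/T + (c:ℝ)^2*M*((M:ℝ)-1)/((T:ℝ)*((T:ℝ)-1))) * (w:ℝ)^2
        + ((c:ℝ)^2*M/T - (c:ℝ)^2*M*((M:ℝ)-1)/((T:ℝ)*((T:ℝ)-1))) * (w:ℝ) := by
  have hT0 : (T:ℝ) ≠ 0 := by positivity
  have hT1 : (T:ℝ) - 1 ≠ 0 := by
    have : (2:ℝ) ≤ (T:ℝ) := by exact_mod_cast hT
    linarith
  have h1 : ∑ k ∈ range (M+1), ((w.choose k : ℝ) * ((T-w).choose (M-k) : ℝ) / (T.choose M : ℝ))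
        * ((w:ℝ) + c*k) ^ 2
      = ∑ k ∈ range (M+1),
        ((w:ℝ)^2 * ((w.choose k : ℝ) * ((T-w).choose (M-k) : ℝ) / (T.choose M : ℝ))
        + (2*(c:ℝ)*w + (c:ℝ)^2) * ((k:ℝ) * ((w.choose k : ℝ) * ((T-w).choose (M-k) : ℝ) / (T.choose M : ℝ)))
        + (c:ℝ)^2 * ((k:ℝ) * ((k:ℝ)-1) * ((w.choose k : ℝ) * ((T-w).choose (M-k) : ℝ) / (T.choose M : ℝ)))) :=
    Finset.sum_congr rfl (fun k _ => by ring)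
  rw [h1, Finset.sum_add_distrib, Finset.sum_add_distrib, ← Finset.mul_sum, ← Finset.mul_sum,
    ← Finset.mul_sum, sumA w T M hw hM, sumB w T M hw hM (by omega), sumC w T M hw hM hT]
  field_simp
  ring

lemma momM_zero (W0 B0 m c s : ℕ) (h : W0 ≤ W0 + B0) : momM W0 B0 m c s 0 = (W0:ℝ)^s := by
  unfold momM
  have : ∀ w ∈ Finset.range (urnT W0 B0 m c 0 + 1),
      massM W0 B0 m c 0 w * (w:ℝ)^s = if w = W0 then (W0:ℝ)^s else 0 := by
    intro w _
    simp only [massM]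
    split
    · rename_i hh; subst hh; simp
    · simp
  rw [Finset.sum_congr rfl this, Finset.sum_ite_eq' (Finset.range (urnT W0 B0 m c 0 + 1)) W0
    (fun _ => (W0:ℝ)^s)]
  have : W0 ∈ Finset.range (urnT W0 B0 m c 0 + 1) := by
    simp [urnT]
  simp [this]

lemma momM_succ_eq (W0 B0 m c s n : ℕ) :
    momM W0 B0 m c s (n+1)
      = ∑ w ∈ Finset.range (urnT W0 B0 m c n + 1), massM W0 B0 m c n w *
          ∑ k ∈ Finset.range (m+1),
            ((w.choose k : ℝ) * ((urnT W0 B0 m c n - w).choose (m-k) : ℝ)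
              / ((urnT W0 B0 m c n).choose m : ℝ)) * ((w:ℝ) + c*k) ^ s := by
  unfold momM
  have hunfold : ∀ v, massM W0 B0 m c (n+1) v
      = ∑ w ∈ Finset.range (urnT W0 B0 m c n + 1), ∑ k ∈ Finset.range (m + 1),
        if v = w + c * k then
          massM W0 B0 m c n w *
            ((Nat.choose w k * Nat.choose (urnT W0 B0 m c n - w) (m - k) : ℝ) /
              (Nat.choose (urnT W0 B0 m c n) m : ℝ))
        else 0 := fun v => by rw [massM]
  calc ∑ v ∈ Finset.range (urnT W0 B0 m c (n+1) + 1), massM W0 B0 m c (n+1) v * (v:ℝ)^s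
      = ∑ v ∈ Finset.range (urnT W0 B0 m c (n+1) + 1),
          ∑ w ∈ Finset.range (urnT W0 B0 m c n + 1), ∑ k ∈ Finset.range (m + 1),
          (if v = w + c * k then
            massM W0 B0 m c n w *
              ((Nat.choose w k * Nat.choose (urnT W0 B0 m c n - w) (m - k) : ℝ) /
                (Nat.choose (urnT W0 B0 m c n) m : ℝ))
          else 0) * (v:ℝ)^s := by
        refine Finset.sum_congr rfl (fun v _ => ?_)
        rw [hunfold v, Finset.sum_mul]
        exact Finset.sum_congr rfl (fun w _ => by rw [Finset.sum_mul])
    _ = ∑ w ∈ Finset.range (urnT W0 B0 m c n + 1), ∑ k ∈ Finset.range (m + 1),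
          ∑ v ∈ Finset.range (urnT W0 B0 m c (n+1) + 1),
          (if v = w + c * k then
            massM W0 B0 m c n w *
              ((Nat.choose w k * Nat.choose (urnT W0 B0 m c n - w) (m - k) : ℝ) /
                (Nat.choose (urnT W0 B0 m c n) m : ℝ))
          else 0) * (v:ℝ)^s := by
        rw [Finset.sum_comm]
        exact Finset.sum_congr rfl (fun w _ => Finset.sum_comm)
    _ = ∑ w ∈ Finset.range (urnT W0 B0 m c n + 1), massM W0 B0 m c n w *
          ∑ k ∈ Finset.range (m+1),
            ((w.choose k : ℝ) * ((urnT W0 B0 m c n - w).choose (m-k) : ℝ)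
              / ((urnT W0 B0 m c n).choose m : ℝ)) * ((w:ℝ) + c*k) ^ s := by
        refine Finset.sum_congr rfl (fun w hw => ?_)
        rw [Finset.mul_sum]
        refine Finset.sum_congr rfl (fun k hk => ?_)
        have hmem : w + c * k ∈ Finset.range (urnT W0 B0 m c (n+1) + 1) := by
          simp only [Finset.mem_range] at hw hk ⊢
          have : c * k ≤ c * m := Nat.mul_le_mul_left c (by omega)
          simp only [urnT] at hw ⊢
          have : (n+1) * m * c = n * m * c + m * c := by ring
          nlinarith
        have h1 : ∀ v, (if v = w + c * k then
            massM W0 B0 m c n w *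
              ((Nat.choose w k * Nat.choose (urnT W0 B0 m c n - w) (m - k) : ℝ) /
                (Nat.choose (urnT W0 B0 m c n) m : ℝ))
          else 0) * (v:ℝ)^s
          = if v = w + c * k then
            massM W0 B0 m c n w *
              ((Nat.choose w k * Nat.choose (urnT W0 B0 m c n - w) (m - k) : ℝ) /
                (Nat.choose (urnT W0 B0 m c n) m : ℝ)) * ((w + c*k : ℕ):ℝ)^s
          else 0 := by
          intro v
          split
          · rename_i hv; subst hv; rfl
          · rw [zero_mul]
        rw [Finset.sum_congr rfl (fun v _ => h1 v), Finset.sum_ite_eq' _ (w + c*k) _]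
        simp only [hmem, if_true]
        push_cast
        ring

section rec
variable (W0 B0 m c : ℕ)

lemma urnT_ge (hW0 : 1 ≤ W0) (hB0 : 1 ≤ B0) (n : ℕ) : 2 ≤ urnT W0 B0 m c n := by
  simp [urnT]; omega

lemma urnT_ge_m (hT0 : m ≤ W0 + B0) (n : ℕ) : m ≤ urnT W0 B0 m c n := by
  simp [urnT]; omega

lemma urnT_succ (n : ℕ) : urnT W0 B0 m c (n+1) = urnT W0 B0 m c n + m * c := by
  simp [urnT]; ring

lemma mom_rec1 (hW0 : 1 ≤ W0) (hB0 : 1 ≤ B0) (hT0 : m ≤ W0 + B0) (n : ℕ) :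
    momM W0 B0 m c 1 (n+1)
      = (((urnT W0 B0 m c n : ℝ) + c*m)/(urnT W0 B0 m c n : ℝ)) * momM W0 B0 m c 1 n := by
  rw [momM_succ_eq]
  have h : ∀ w ∈ Finset.range (urnT W0 B0 m c n + 1),
      massM W0 B0 m c n w *
        ∑ k ∈ Finset.range (m+1),
          ((w.choose k : ℝ) * ((urnT W0 B0 m c n - w).choose (m-k) : ℝ)
            / ((urnT W0 B0 m c n).choose m : ℝ)) * ((w:ℝ) + c*k) ^ 1
      = (((urnT W0 B0 m c n : ℝ) + c*m)/(urnT W0 B0 m c n : ℝ)) *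
          (massM W0 B0 m c n w * (w:ℝ)^1) := by
    intro w hw
    rw [step1 c w (urnT W0 B0 m c n) m (by simpa using Nat.lt_succ_iff.mp (Finset.mem_range.mp hw))
      (urnT_ge_m W0 B0 m c hT0 n) (urnT_ge W0 B0 m c hW0 hB0 n)]
    ring
  rw [Finset.sum_congr rfl h, ← Finset.mul_sum]
  rfl

lemma mom_closed1 (hW0 : 1 ≤ W0) (hB0 : 1 ≤ B0) (hT0 : m ≤ W0 + B0) (n : ℕ) :
    momM W0 B0 m c 1 n = (W0:ℝ) * (urnT W0 B0 m c n : ℝ) / ((W0:ℝ) + B0) := by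
  induction n with
  | zero =>
    rw [momM_zero W0 B0 m c 1 (by omega)]
    have : (urnT W0 B0 m c 0 : ℝ) = (W0:ℝ) + B0 := by simp [urnT]
    rw [this]
    have h0 : (W0:ℝ) + B0 ≠ 0 := by positivity
    field_simp
  | succ n ih =>
    rw [mom_rec1 W0 B0 m c hW0 hB0 hT0 n, ih]
    have hT : (urnT W0 B0 m c n : ℝ) ≠ 0 := by
      have := urnT_ge W0 B0 m c hW0 hB0 n
      have : (2:ℝ) ≤ (urnT W0 B0 m c n : ℝ) := by exact_mod_cast this
      linarith
    have hsucc : (urnT W0 B0 m c (n+1) : ℝ) = (urnT W0 B0 m c n : ℝ) + m * c := by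
      rw [urnT_succ]; push_cast; ring
    rw [hsucc]
    field_simp

lemma mom_rec2 (hW0 : 1 ≤ W0) (hB0 : 1 ≤ B0) (hT0 : m ≤ W0 + B0) (n : ℕ) :
    momM W0 B0 m c 2 (n+1)
      = (1 + 2*(c:ℝ)*m/(urnT W0 B0 m c n : ℝ)
            + (c:ℝ)^2*m*((m:ℝ)-1)/((urnT W0 B0 m c n : ℝ)*((urnT W0 B0 m c n : ℝ)-1)))
          * momM W0 B0 m c 2 n
        + ((c:ℝ)^2*m/(urnT W0 B0 m c n : ℝ)
            - (c:ℝ)^2*m*((m:ℝ)-1)/((urnT W0 B0 m c n : ℝ)*((urnT W0 B0 m c n : ℝ)-1)))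
          * momM W0 B0 m c 1 n := by
  rw [momM_succ_eq]
  have h : ∀ w ∈ Finset.range (urnT W0 B0 m c n + 1),
      massM W0 B0 m c n w *
        ∑ k ∈ Finset.range (m+1),
          ((w.choose k : ℝ) * ((urnT W0 B0 m c n - w).choose (m-k) : ℝ)
            / ((urnT W0 B0 m c n).choose m : ℝ)) * ((w:ℝ) + c*k) ^ 2
      = (1 + 2*(c:ℝ)*m/(urnT W0 B0 m c n : ℝ)
            + (c:ℝ)^2*m*((m:ℝ)-1)/((urnT W0 B0 m c n : ℝ)*((urnT W0 B0 m c n : ℝ)-1)))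
          * (massM W0 B0 m c n w * (w:ℝ)^2)
        + ((c:ℝ)^2*m/(urnT W0 B0 m c n : ℝ)
            - (c:ℝ)^2*m*((m:ℝ)-1)/((urnT W0 B0 m c n : ℝ)*((urnT W0 B0 m c n : ℝ)-1)))
          * (massM W0 B0 m c n w * (w:ℝ)^1) := by
    intro w hw
    rw [step2 c w (urnT W0 B0 m c n) m (by simpa using Nat.lt_succ_iff.mp (Finset.mem_range.mp hw))
      (urnT_ge_m W0 B0 m c hT0 n) (urnT_ge W0 B0 m c hW0 hB0 n)]
    ring
  rw [Finset.sum_congr rfl h, Finset.sum_add_distrib, ← Finset.mul_sum, ← Finset.mul_sum]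
  rfl

end rec

noncomputable def Qp (x : ℝ) (n : ℕ) : ℝ := ∏ i ∈ Finset.range n, (x + i)

lemma Qp_succ (x : ℝ) (n : ℕ) : Qp x (n+1) = Qp x n * (x + n) := Finset.prod_range_succ _ _

lemma Qp_pos (x : ℝ) (hx : 0 < x) (n : ℕ) : 0 < Qp x n :=
  Finset.prod_pos (fun i _ => by positivity)

lemma gchoose_shift (x : ℝ) (n : ℕ) : gchoose ((n:ℝ) - 1 + x) n = Qp x n / (Nat.factorial n : ℝ) := by
  unfold gchoose Qp
  congr 1
  cases n with
  | zero => simp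
  | succ n' =>
    have h1 : ∀ i ∈ Finset.range (n'+1), ((n'+1 : ℕ):ℝ) - 1 + x - i = x + ((n' - i : ℕ):ℝ) := by
      intro i hi
      have hi' : i ≤ n' := by simpa [Nat.lt_succ_iff] using Finset.mem_range.mp hi
      rw [Nat.cast_sub hi']
      push_cast
      ring
    rw [Finset.prod_congr rfl h1]
    have := Finset.prod_range_reflect (fun j => x + (j:ℝ)) (n'+1)
    simpa using this

lemma gchoose_add (x : ℝ) (l : ℕ) :
    gchoose ((l:ℝ) + x) (l+1) = Qp x (l+1) / (Nat.factorial (l+1) : ℝ) := by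
  have h := gchoose_shift x (l+1)
  have h2 : ((l+1 : ℕ):ℝ) - 1 + x = (l:ℝ) + x := by push_cast; ring
  rw [h2] at h
  exact h

lemma ratio_cancel (f A B C D : ℝ) (hf : f ≠ 0) :
    (A/f * (B/f))/(C/f * (D/f)) = A*B/(C*D) := by
  rcases eq_or_ne (C*D) 0 with h | h
  · have h2 : C/f * (D/f) = 0 := by
      rcases mul_eq_zero.mp h with h | h <;> simp [h]
    rw [h2, h, div_zero, div_zero]
  · have hC : C ≠ 0 := fun hh => h (by simp [hh])
    have hD : D ≠ 0 := fun hh => h (by simp [hh])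
    field_simp


lemma step_alg (n Q1 Q2 Qa Qb S W K T D cR mR t0R l1 l2 : ℝ)
    (hQ1 : Q1 ≠ 0) (hQ2 : Q2 ≠ 0) (hQa : Qa ≠ 0) (hQb : Qb ≠ 0)
    (hL1 : l1 + n ≠ 0) (hL2 : l2 + n ≠ 0)
    (hT : T ≠ 0) (hT1 : T - 1 ≠ 0) (hD : D ≠ 0) (ht0 : t0R ≠ 0)
    (hTdef : T = t0R + n * D)
    (hkey : (l1 + n) * (l2 + n) * D^2 = T*(T-1) + 2*cR*mR*(T-1) + cR^2*mR*(mR-1))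
    (hK : K = W * cR^2 * mR / t0R) :
    (1 + 2*cR*mR/T + cR^2*mR*(mR-1)/(T*(T-1))) * (Q1*Q2/(Qa*Qb) * (W^2 + K*S))
      + (cR^2*mR/T - cR^2*mR*(mR-1)/(T*(T-1))) * (W*T/t0R)
    = Q1*(l1+n)*(Q2*(l2+n)) / (Qa*(t0R/D+n)*(Qb*((t0R-1)/D+n))) *
        (W^2 + K*(S + ((n + (t0R-mR)/D)/(n + (t0R-1)/D)) *
          (Qa*(t0R/D+n)*(Qb*((t0R-1)/D+n))) / (Q1*(l1+n)*(Q2*(l2+n))))) := by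
  have hA : t0R/D + n = T/D := by rw [hTdef]; field_simp
  have hB : (t0R-1)/D + n = (T-1)/D := by rw [hTdef]; field_simp; ring
  have hr : (n + (t0R-mR)/D) = (T-mR)/D := by rw [hTdef]; field_simp; ring
  have hrB : (n + (t0R-1)/D) = (T-1)/D := by rw [hTdef]; field_simp; ring
  rw [hA, hr, hrB]
  rw [show (t0R-1)/D + n = (T-1)/D from hB]
  have hTD : T/D ≠ 0 := div_ne_zero hT hD
  have hT1D : (T-1)/D ≠ 0 := div_ne_zero hT1 hD
  have hX : Q1*(l1+n)*(Q2*(l2+n)) ≠ 0 :=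
    mul_ne_zero (mul_ne_zero hQ1 hL1) (mul_ne_zero hQ2 hL2)
  have hY : Qa*(T/D)*(Qb*((T-1)/D)) ≠ 0 :=
    mul_ne_zero (mul_ne_zero hQa hTD) (mul_ne_zero hQb hT1D)
  have hgn : Q1*(l1+n)*(Q2*(l2+n)) / (Qa*(T/D)*(Qb*((T-1)/D))) *
      (W^2 + K*(S + (((T-mR)/D)/((T-1)/D)) *
        (Qa*(T/D)*(Qb*((T-1)/D))) / (Q1*(l1+n)*(Q2*(l2+n)))))
    = Q1*(l1+n)*(Q2*(l2+n)) / (Qa*(T/D)*(Qb*((T-1)/D))) * (W^2 + K*S)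
      + K * ((T-mR)/(T-1)) := by
    field_simp
    ring
  rw [hgn]
  have e2 : (l1+n)*(l2+n) = (T*(T-1) + 2*cR*mR*(T-1) + cR^2*mR*(mR-1))/D^2 := by
    rw [eq_div_iff (pow_ne_zero 2 hD)]; exact hkey
  have h1 : Q1*(l1+n)*(Q2*(l2+n)) / (Qa*(T/D)*(Qb*((T-1)/D)))
      = (1 + 2*cR*mR/T + cR^2*mR*(mR-1)/(T*(T-1))) * (Q1*Q2/(Qa*Qb)) := by
    have e1 : Q1*(l1+n)*(Q2*(l2+n)) = Q1*Q2*((l1+n)*(l2+n)) := by ring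
    rw [e1, e2]
    field_simp
  rw [h1]
  have h2 : K * ((T-mR)/(T-1)) = (cR^2*mR/T - cR^2*mR*(mR-1)/(T*(T-1))) * (W*T/t0R) := by
    rw [hK]
    field_simp
    ring
  rw [h2]
  ring

lemma key_alg (P S x d : ℝ) (hd : d ≠ 0) :
    ((P + 1/2 * S)/d + x) * ((P - 1/2 * S)/d + x) * d^2 = (P + x*d)^2 - S^2/4 := by
  field_simp
  ring


set_option maxHeartbeats 2000000 in
/-- In model `M`, the exact second moment `E(W_n²)`, which determines the variance
`V(W_n) = E(W_n²) − E(W_n)²`. -/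
theorem modelM_secondMoment (W0 B0 m c : ℕ) (hm : 1 ≤ m) (hc : 1 ≤ c)
    (hW0 : 1 ≤ W0) (hB0 : 1 ≤ B0) (hT0 : m ≤ W0 + B0)
    (lam1 lam2 : ℝ)
    (hlam1 : lam1 = (-(1/2) + (m : ℝ) * c + ((W0 : ℝ) + B0) +
      (1/2) * Real.sqrt (1 + 4 * (m : ℝ) * c * (1 + (c : ℝ)))) / ((m : ℝ) * c))
    (hlam2 : lam2 = (-(1/2) + (m : ℝ) * c + ((W0 : ℝ) + B0) -
      (1/2) * Real.sqrt (1 + 4 * (m : ℝ) * c * (1 + (c : ℝ)))) / ((m : ℝ) * c)) :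
    ∀ n : ℕ, momM W0 B0 m c 2 n =
      (gchoose ((n : ℝ) - 1 + lam1) n * gchoose ((n : ℝ) - 1 + lam2) n) /
        (gchoose ((n : ℝ) - 1 + ((W0 : ℝ) + B0) / ((m : ℝ) * c)) n *
          gchoose ((n : ℝ) - 1 + (((W0 : ℝ) + B0) - 1) / ((m : ℝ) * c)) n) *
      ((W0 : ℝ) ^ 2 + (W0 : ℝ) * (c : ℝ) ^ 2 * m / ((W0 : ℝ) + B0) *
        ∑ ℓ ∈ Finset.range n,
          (((ℓ : ℝ) + (((W0 : ℝ) + B0) - m) / ((m : ℝ) * c)) /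
              ((ℓ : ℝ) + (((W0 : ℝ) + B0) - 1) / ((m : ℝ) * c))) *
            (gchoose ((ℓ : ℝ) + ((W0 : ℝ) + B0) / ((m : ℝ) * c)) (ℓ + 1) *
              gchoose ((ℓ : ℝ) + (((W0 : ℝ) + B0) - 1) / ((m : ℝ) * c)) (ℓ + 1)) /
            (gchoose ((ℓ : ℝ) + lam1) (ℓ + 1) * gchoose ((ℓ : ℝ) + lam2) (ℓ + 1))) := by
  have hmR : (1:ℝ) ≤ (m:ℝ) := by exact_mod_cast hm
  have hcR : (1:ℝ) ≤ (c:ℝ) := by exact_mod_cast hc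
  have ht02 : (2:ℝ) ≤ (W0:ℝ) + B0 := by
    have h1 : (1:ℝ) ≤ (W0:ℝ) := by exact_mod_cast hW0
    have h2 : (1:ℝ) ≤ (B0:ℝ) := by exact_mod_cast hB0
    linarith
  have hmT : (m:ℝ) ≤ (W0:ℝ) + B0 := by exact_mod_cast hT0
  set t0 : ℝ := (W0:ℝ) + B0 with ht0def
  set D : ℝ := (m:ℝ) * c with hDdef
  have hDpos : 0 < D := by rw [hDdef]; nlinarith
  have hD0 : D ≠ 0 := ne_of_gt hDpos
  have ht0pos : 0 < t0 := by linarith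
  have hsqnn : (0:ℝ) ≤ 1 + 4 * (m : ℝ) * c * (1 + (c : ℝ)) := by nlinarith
  have hsq : Real.sqrt (1 + 4 * (m : ℝ) * c * (1 + (c : ℝ))) ^ 2
      = 1 + 4 * (m : ℝ) * c * (1 + (c : ℝ)) := Real.sq_sqrt hsqnn
  have hsqrtnn : (0:ℝ) ≤ Real.sqrt (1 + 4 * (m : ℝ) * c * (1 + (c : ℝ))) := Real.sqrt_nonneg _
  have hl1pos : 0 < lam1 := by
    rw [hlam1]
    apply div_pos _ hDpos
    nlinarith
  have hl2pos : 0 < lam2 := by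
    rw [hlam2]
    apply div_pos _ hDpos
    have hlt : Real.sqrt (1 + 4 * (m : ℝ) * c * (1 + (c : ℝ))) < 2*D + 2*t0 - 1 := by
      rw [show (2*D + 2*t0 - 1 : ℝ) = 2*((m:ℝ)*c) + 2*((W0:ℝ)+B0) - 1 from by rw [hDdef, ht0def]]
      apply (Real.sqrt_lt' (by nlinarith)).mpr
      nlinarith [mul_le_mul_of_nonneg_right hmR (by positivity : (0:ℝ) ≤ (c:ℝ)*(c:ℝ))]
    nlinarith
  have key : ∀ x : ℝ, (lam1 + x) * (lam2 + x) * D^2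
      = (t0 + x*D) * ((t0 + x*D) - 1) + 2*(c:ℝ)*(m:ℝ)*((t0 + x*D) - 1)
        + (c:ℝ)^2*(m:ℝ)*((m:ℝ)-1) := by
    intro x
    rw [hlam1, hlam2, key_alg (-(1/2) + D + t0) _ x D hD0, hsq, hDdef]
    ring
  have hbpos : 0 < (t0 - 1) / D := by
    apply div_pos _ hDpos; linarith
  have hapos : 0 < t0 / D := div_pos ht0pos hDpos
  have main : ∀ n : ℕ, momM W0 B0 m c 2 n =
      Qp lam1 n * Qp lam2 n / (Qp (t0 / D) n * Qp ((t0 - 1) / D) n) *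
        ((W0:ℝ)^2 + (W0:ℝ) * (c:ℝ)^2 * (m:ℝ) / t0 *
          ∑ ℓ ∈ Finset.range n,
            (((ℓ:ℝ) + (t0 - (m:ℝ)) / D) / ((ℓ:ℝ) + (t0 - 1) / D)) *
              (Qp (t0 / D) (ℓ+1) * Qp ((t0 - 1) / D) (ℓ+1)) /
              (Qp lam1 (ℓ+1) * Qp lam2 (ℓ+1))) := by
    intro n
    induction n with
    | zero =>
      rw [momM_zero W0 B0 m c 2 (by omega)]
      simp [Qp]
    | succ n ih =>
      have hTcast : ((urnT W0 B0 m c n : ℕ) : ℝ) = t0 + (n:ℝ) * D := by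
        rw [ht0def, hDdef]; simp [urnT]; ring_nf
      have hT2 : (2:ℝ) ≤ t0 + (n:ℝ) * D := by
        rw [← hTcast]; exact_mod_cast urnT_ge W0 B0 m c hW0 hB0 n
      have hTne : t0 + (n:ℝ) * D ≠ 0 := by linarith
      have hT1ne : t0 + (n:ℝ) * D - 1 ≠ 0 := by linarith
      have hnn : (0:ℝ) ≤ (n:ℝ) := Nat.cast_nonneg n
      rw [mom_rec2 W0 B0 m c hW0 hB0 hT0 n, mom_closed1 W0 B0 m c hW0 hB0 hT0 n, ih,
        hTcast, ← ht0def, Finset.sum_range_succ]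
      simp only [Qp_succ]
      exact step_alg (n:ℝ) (Qp lam1 n) (Qp lam2 n) (Qp (t0/D) n) (Qp ((t0-1)/D) n)
        _ (W0:ℝ) _ (t0 + (n:ℝ)*D) D (c:ℝ) (m:ℝ) t0 lam1 lam2
        (ne_of_gt (Qp_pos _ hl1pos n)) (ne_of_gt (Qp_pos _ hl2pos n))
        (ne_of_gt (Qp_pos _ hapos n)) (ne_of_gt (Qp_pos _ hbpos n))
        (by positivity) (by positivity)
        hTne hT1ne hD0 (ne_of_gt ht0pos) rfl
        (by rw [show t0 + (n:ℝ)*D = t0 + (n:ℝ)*D from rfl]; exact key (n:ℝ)) rfl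
  intro n
  rw [main n]
  have hfac : (Nat.factorial n : ℝ) ≠ 0 := by
    exact_mod_cast (Nat.factorial_pos n).ne'
  have h1 : gchoose ((n:ℝ) - 1 + lam1) n * gchoose ((n:ℝ) - 1 + lam2) n /
        (gchoose ((n:ℝ) - 1 + t0 / D) n * gchoose ((n:ℝ) - 1 + (t0 - 1) / D) n)
      = Qp lam1 n * Qp lam2 n / (Qp (t0 / D) n * Qp ((t0 - 1) / D) n) := by
    rw [gchoose_shift, gchoose_shift, gchoose_shift, gchoose_shift]
    exact ratio_cancel _ _ _ _ _ hfac
  rw [h1]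
  have h2 : ∀ l : ℕ,
      (((l:ℝ) + (t0 - (m:ℝ)) / D) / ((l:ℝ) + (t0 - 1) / D)) *
          (gchoose ((l:ℝ) + t0 / D) (l + 1) * gchoose ((l:ℝ) + (t0 - 1) / D) (l + 1)) /
          (gchoose ((l:ℝ) + lam1) (l + 1) * gchoose ((l:ℝ) + lam2) (l + 1))
        = (((l:ℝ) + (t0 - (m:ℝ)) / D) / ((l:ℝ) + (t0 - 1) / D)) *
          (Qp (t0 / D) (l+1) * Qp ((t0 - 1) / D) (l+1)) /
          (Qp lam1 (l+1) * Qp lam2 (l+1)) := by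
    intro l
    have hfacl : (Nat.factorial (l+1) : ℝ) ≠ 0 := by
      exact_mod_cast (Nat.factorial_pos (l+1)).ne'
    rw [gchoose_add, gchoose_add, gchoose_add, gchoose_add,
      mul_div_assoc, ratio_cancel _ _ _ _ _ hfacl, ← mul_div_assoc]
  rw [Finset.sum_congr rfl (fun l _ => h2 l)]
end

section
/- In model M, for all n ≥ 1 and s ≥ 1 the s-th moment satisfies the recurrence E(W_n^s) = α_{n−1,s}·E(W_{n−1}^s) + β_{n−1,s}, where α_{n,s} := Σ_{ℓ=0}^{s} c^ℓ·C(s,ℓ)·C(m,ℓ)/C(T_n,ℓ) and β_{n,s} := Σ_{i=2}^{s} E(W_n^{s+1−i}) · Σ_{ℓ=i}^{s} C(s,ℓ)·c^ℓ · Σ_{j=ℓ+1−i}^{ℓ} (−1)^{j+i−1−ℓ} · S(ℓ,j)·c₁(j, ℓ+1−i)·C(m,j)/C(T_n,j). -/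
open Finset

/-- Stirling numbers of the second kind `S(n,k)`. -/
def stirling2 : ℕ → ℕ → ℕ
  | 0, 0 => 1
  | 0, _ + 1 => 0
  | _ + 1, 0 => 0
  | n + 1, k + 1 => (k + 1) * stirling2 n (k + 1) + stirling2 n k

/-- Unsigned Stirling numbers of the first kind `c₁(n,k)`. -/
def stirling1 : ℕ → ℕ → ℕ
  | 0, 0 => 1
  | 0, _ + 1 => 0
  | _ + 1, 0 => 0
  | n + 1, k + 1 => n * stirling1 n (k + 1) + stirling1 n k

/-- The coefficient `α_{n,s}` of the moment recurrence in model `M`. -/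
noncomputable def alphaM (W0 B0 m c n s : ℕ) : ℝ :=
  ∑ ℓ ∈ Finset.range (s + 1),
    (c : ℝ) ^ ℓ * (Nat.choose s ℓ * Nat.choose m ℓ : ℝ) /
      (Nat.choose (urnT W0 B0 m c n) ℓ : ℝ)

/-- The inhomogeneous term `β_{n,s}` of the moment recurrence in model `M`. -/
noncomputable def betaM (W0 B0 m c n s : ℕ) : ℝ :=
  ∑ i ∈ Finset.Icc 2 s, momM W0 B0 m c (s + 1 - i) n *
    ∑ ℓ ∈ Finset.Icc i s, (Nat.choose s ℓ : ℝ) * (c : ℝ) ^ ℓ *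
      ∑ j ∈ Finset.Icc (ℓ + 1 - i) ℓ, (-1 : ℝ) ^ (j + i - 1 - ℓ) *
        (stirling2 ℓ j * stirling1 j (ℓ + 1 - i) * Nat.choose m j : ℝ) /
        (Nat.choose (urnT W0 B0 m c n) j : ℝ)

lemma stirling1_rec (n k : ℕ) :
    stirling1 (n+1) (k+1) = n * stirling1 n (k+1) + stirling1 n k := rfl
lemma stirling1_zz : stirling1 0 0 = 1 := rfl

lemma stirling2_zero_right : ∀ n, stirling2 (n+1) 0 = 0 := fun _ => rfl
lemma stirling1_zero_right : ∀ n, stirling1 (n+1) 0 = 0 := fun _ => rfl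

lemma stirling2_eq_zero : ∀ {n k}, n < k → stirling2 n k = 0 := by
  intro n
  induction n with
  | zero => intro k hk; match k, hk with | k+1, _ => rfl
  | succ n ih =>
    intro k hk
    match k, hk with
    | k+1, hk =>
      show (k + 1) * stirling2 n (k + 1) + stirling2 n k = 0
      rw [ih (by omega), ih (by omega)]; ring

lemma stirling1_eq_zero : ∀ {n k}, n < k → stirling1 n k = 0 := by
  intro n
  induction n with
  | zero => intro k hk; match k, hk with | k+1, _ => rfl
  | succ n ih =>
    intro k hk
    match k, hk with
    | k+1, hk =>
      show n * stirling1 n (k + 1) + stirling1 n k = 0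
      rw [ih (by omega), ih (by omega)]; ring

lemma stirling2_self : ∀ n, stirling2 n n = 1 := by
  intro n; induction n with
  | zero => rfl
  | succ n ih =>
    show (n + 1) * stirling2 n (n + 1) + stirling2 n n = 1
    rw [stirling2_eq_zero (by omega), ih]; ring

lemma stirling1_self : ∀ n, stirling1 n n = 1 := by
  intro n; induction n with
  | zero => rfl
  | succ n ih =>
    show n * stirling1 n (n + 1) + stirling1 n n = 1
    rw [stirling1_eq_zero (by omega), ih]; ring

-- k * (k)_j = (k)_{j+1} + j * (k)_j
lemma urn_mul_descFactorial (k j : ℕ) :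
    k * k.descFactorial j = k.descFactorial (j+1) + j * k.descFactorial j := by
  rcases le_or_gt j k with h | h
  · rw [Nat.descFactorial_succ, ← Nat.add_mul]
    congr 1; omega
  · rw [Nat.descFactorial_eq_zero_iff_lt.2 h, Nat.descFactorial_eq_zero_iff_lt.2 (by omega)]
    ring

lemma urn_vander (a b p : ℕ) :
    ∑ k ∈ range (p+1), a.choose k * b.choose (p-k) = (a+b).choose p := by
  rw [Nat.add_choose_eq,
    Finset.Nat.sum_antidiagonal_eq_sum_range_succ (fun x y => a.choose x * b.choose y)]

lemma urn_descFactorial_mul_choose (w j k' : ℕ) :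
    (j + k').descFactorial j * w.choose (j + k') = w.descFactorial j * (w - j).choose k' := by
  rcases le_or_gt j w with h | h
  · rcases le_or_gt (j + k') w with h2 | h2
    · have key := Nat.choose_mul (n := w) (k := j + k') (s := j) (Nat.le_add_right _ _)
      rw [Nat.descFactorial_eq_factorial_mul_choose, Nat.descFactorial_eq_factorial_mul_choose w]
      rw [mul_assoc, mul_comm (Nat.choose (j+k') j), key, Nat.add_sub_cancel_left]
      ring
    · rw [Nat.choose_eq_zero_of_lt h2, Nat.choose_eq_zero_of_lt (by omega)]
      ring
  · rw [Nat.choose_eq_zero_of_lt (by omega), Nat.descFactorial_eq_zero_iff_lt.2 h]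
    ring

lemma urn_hyp_falling (T w m j : ℕ) (hj : j ≤ m) (hw : w ≤ T) :
    ∑ k ∈ range (m+1), k.descFactorial j * (w.choose k * (T-w).choose (m-k))
      = w.descFactorial j * (T-j).choose (m-j) := by
  rw [range_eq_Ico, ← Finset.sum_Ico_consecutive _ (Nat.zero_le j) (by omega : j ≤ m + 1)]
  have h1 : ∑ k ∈ Ico 0 j, k.descFactorial j * (w.choose k * (T-w).choose (m-k)) = 0 := by
    apply Finset.sum_eq_zero
    intro k hk
    rw [Nat.descFactorial_eq_zero_iff_lt.2 (by simp at hk; omega)]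
    ring
  rw [h1, zero_add, Finset.sum_Ico_eq_sum_range]
  have h2 : m + 1 - j = (m - j) + 1 := by omega
  rw [h2]
  have h3 : ∀ i ∈ range ((m-j)+1),
      (j + i).descFactorial j * (w.choose (j+i) * (T-w).choose (m-(j+i)))
        = w.descFactorial j * ((w-j).choose i * (T-w).choose ((m-j)-i)) := by
    intro i hi
    have : m - (j+i) = (m-j) - i := by omega
    rw [this, ← mul_assoc, urn_descFactorial_mul_choose, mul_assoc]
  rw [Finset.sum_congr rfl h3, ← Finset.mul_sum, urn_vander]
  rcases le_or_gt j w with h | h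
  · congr 2; omega
  · rw [Nat.descFactorial_eq_zero_iff_lt.2 h]; ring

lemma urn_pow_eq_sum_stirling2 (k ℓ : ℕ) :
    k ^ ℓ = ∑ j ∈ range (ℓ+1), stirling2 ℓ j * k.descFactorial j := by
  induction ℓ with
  | zero => simp [stirling2]
  | succ ℓ ih =>
    rw [pow_succ, ih, Finset.sum_mul]
    have h1 : ∀ j ∈ range (ℓ+1),
        stirling2 ℓ j * k.descFactorial j * k
          = stirling2 ℓ j * k.descFactorial (j+1) + j * (stirling2 ℓ j * k.descFactorial j) := by
      intro j _
      rw [mul_comm _ k, mul_left_comm, urn_mul_descFactorial]; ring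
    rw [Finset.sum_congr rfl h1, Finset.sum_add_distrib]
    rw [Finset.sum_range_succ' (fun j => stirling2 (ℓ+1) j * k.descFactorial j) (ℓ+1)]
    have h0 : stirling2 (ℓ+1) 0 * k.descFactorial 0 = 0 := by
      rw [stirling2_zero_right]; ring
    rw [h0, add_zero]
    have h2 : ∀ j ∈ range (ℓ+1),
        stirling2 (ℓ+1) (j+1) * k.descFactorial (j+1)
          = (j+1) * (stirling2 ℓ (j+1) * k.descFactorial (j+1)) + stirling2 ℓ j * k.descFactorial (j+1) := by
      intro j _
      show ((j+1) * stirling2 ℓ (j+1) + stirling2 ℓ j) * _ = _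
      ring
    rw [Finset.sum_congr rfl h2, Finset.sum_add_distrib]
    have h3 : ∑ j ∈ range (ℓ+1), j * (stirling2 ℓ j * k.descFactorial j)
        = ∑ j ∈ range (ℓ+1), (j+1) * (stirling2 ℓ (j+1) * k.descFactorial (j+1)) := by
      rw [Finset.sum_range_succ' (fun j => j * (stirling2 ℓ j * k.descFactorial j)) ℓ]
      rw [Finset.sum_range_succ (fun j => (j+1) * (stirling2 ℓ (j+1) * k.descFactorial (j+1))) ℓ]
      rw [stirling2_eq_zero (lt_add_one ℓ)]
      simp
    rw [h3, add_comm]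

lemma urn_cast_descFactorial_succ (k j : ℕ) :
    (k.descFactorial (j+1) : ℝ) = ((k:ℝ) - j) * (k.descFactorial j : ℝ) := by
  rcases le_or_gt j k with h | h
  · rw [Nat.descFactorial_succ, Nat.cast_mul, Nat.cast_sub h]
  · rw [Nat.descFactorial_eq_zero_iff_lt.2 h, Nat.descFactorial_eq_zero_iff_lt.2 (by omega)]
    simp

lemma urn_descFactorial_eq_sum_stirling1 (k j : ℕ) :
    (k.descFactorial j : ℝ)
      = ∑ r ∈ range (j+1), (-1:ℝ)^(j-r) * (stirling1 j r : ℝ) * (k:ℝ)^r := by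
  induction j with
  | zero => simp [stirling1_zz]
  | succ j ih =>
    have hx0 : (j:ℝ) * (stirling1 j 0 : ℝ) = 0 := by
      cases j with
      | zero => simp
      | succ j => rw [stirling1_zero_right]; simp
    rw [urn_cast_descFactorial_succ, ih, sub_mul, Finset.mul_sum]
    rw [Finset.sum_range_succ' (fun r => (-1:ℝ)^(j+1-r) * (stirling1 (j+1) r : ℝ) * (k:ℝ)^r) (j+1)]
    have h0 : (-1:ℝ)^(j+1-0) * (stirling1 (j+1) 0 : ℝ) * (k:ℝ)^0 = 0 := by
      rw [stirling1_zero_right]; simp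
    rw [h0, add_zero]
    have h2 : ∀ r ∈ range (j+1),
        (-1:ℝ)^(j+1-(r+1)) * (stirling1 (j+1) (r+1) : ℝ) * (k:ℝ)^(r+1)
          = (j:ℝ) * ((-1:ℝ)^(j-r) * (stirling1 j (r+1) : ℝ) * (k:ℝ)^(r+1))
            + (k:ℝ) * ((-1:ℝ)^(j-r) * (stirling1 j r : ℝ) * (k:ℝ)^r) := by
      intro r _
      rw [stirling1_rec]
      have : j + 1 - (r+1) = j - r := by omega
      rw [this]
      push_cast
      ring
    rw [Finset.sum_congr rfl h2, Finset.sum_add_distrib]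
    have e2 : (j:ℝ) * ∑ r ∈ range (j+1), (-1:ℝ)^(j-r) * (stirling1 j r : ℝ) * (k:ℝ)^r
        = ∑ r ∈ range (j+1), (j:ℝ) * ((-1:ℝ)^(j-r) * (stirling1 j r : ℝ) * (k:ℝ)^r) :=
      Finset.mul_sum _ _ _
    have e3 : ∑ r ∈ range (j+1), (j:ℝ) * ((-1:ℝ)^(j-r) * (stirling1 j r : ℝ) * (k:ℝ)^r)
        = - ∑ r ∈ range (j+1), (j:ℝ) * ((-1:ℝ)^(j-r) * (stirling1 j (r+1) : ℝ) * (k:ℝ)^(r+1)) := by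
      rw [Finset.sum_range_succ'
        (fun r => (j:ℝ) * ((-1:ℝ)^(j-r) * (stirling1 j r : ℝ) * (k:ℝ)^r)) j]
      rw [Finset.sum_range_succ
        (fun r => (j:ℝ) * ((-1:ℝ)^(j-r) * (stirling1 j (r+1) : ℝ) * (k:ℝ)^(r+1))) j]
      rw [stirling1_eq_zero (lt_add_one j)]
      have hz : (j:ℝ) * ((-1:ℝ)^(j-0) * (stirling1 j 0 : ℝ) * (k:ℝ)^0) = 0 := by
        rw [mul_comm ((-1:ℝ)^(j-0)), mul_assoc, ← mul_assoc (j:ℝ), hx0]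
        ring
      rw [hz, add_zero]
      have hterm : ∀ r ∈ range j,
          (j:ℝ) * ((-1:ℝ)^(j-(r+1)) * (stirling1 j (r+1) : ℝ) * (k:ℝ)^(r+1))
            = - ((j:ℝ) * ((-1:ℝ)^(j-r) * (stirling1 j (r+1) : ℝ) * (k:ℝ)^(r+1))) := by
        intro r hr
        have hr' : r < j := Finset.mem_range.1 hr
        have : j - r = (j - (r+1)) + 1 := by omega
        rw [this, pow_succ]
        ring
      rw [Finset.sum_congr rfl hterm]
      push_cast
      rw [Finset.sum_neg_distrib]
      ring
    rw [e2, e3]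
    ring

lemma urn_choose_ratio (T m j : ℕ) (hj : j ≤ m) (hm : m ≤ T) :
    ((T-j).choose (m-j) : ℝ) / (T.choose m : ℝ) = (m.choose j : ℝ) / (T.choose j : ℝ) := by
  have h1 : T.choose m * m.choose j = T.choose j * (T-j).choose (m-j) := Nat.choose_mul (n := T) hj
  have h2 : (0:ℝ) < (T.choose m : ℝ) := by exact_mod_cast Nat.choose_pos hm
  have h3 : (0:ℝ) < (T.choose j : ℝ) := by exact_mod_cast Nat.choose_pos (hj.trans hm)
  have h1' : (T.choose m : ℝ) * (m.choose j : ℝ) = (T.choose j : ℝ) * ((T-j).choose (m-j) : ℝ) := by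
    exact_mod_cast h1
  field_simp
  linarith [h1']

lemma urn_hyp_falling_real (T w m j : ℕ) (hw : w ≤ T) (hm : m ≤ T) :
    ∑ k ∈ range (m+1),
        ((w.choose k * (T-w).choose (m-k) : ℕ) : ℝ) / ((T.choose m : ℕ) : ℝ)
          * (k.descFactorial j : ℝ)
      = (w.descFactorial j : ℝ) * ((m.choose j : ℝ) / (T.choose j : ℝ)) := by
  rcases le_or_gt j m with hj | hj
  · have key := urn_hyp_falling T w m j hj hw
    have : ∑ k ∈ range (m+1),
        ((w.choose k * (T-w).choose (m-k) : ℕ) : ℝ) / ((T.choose m : ℕ) : ℝ)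
          * (k.descFactorial j : ℝ)
        = (∑ k ∈ range (m+1),
            (k.descFactorial j * (w.choose k * (T-w).choose (m-k)) : ℕ)) / ((T.choose m : ℕ) : ℝ) := by
      rw [Nat.cast_sum, Finset.sum_div]
      apply Finset.sum_congr rfl
      intro k _
      push_cast
      ring
    rw [this, key, ← urn_choose_ratio T m j hj hm]
    push_cast
    ring
  · have hz : ∀ k ∈ range (m+1), ((w.choose k * (T-w).choose (m-k) : ℕ) : ℝ) / ((T.choose m : ℕ) : ℝ)
        * (k.descFactorial j : ℝ) = 0 := by
      intro k hk
      rw [Nat.descFactorial_eq_zero_iff_lt.2 (by simp at hk; omega)]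
      simp
    rw [Finset.sum_eq_zero hz, Nat.choose_eq_zero_of_lt hj]
    simp

lemma urn_momM_succ (W0 B0 m c s n : ℕ) :
    momM W0 B0 m c s (n+1) =
      ∑ w ∈ range (urnT W0 B0 m c n + 1), massM W0 B0 m c n w *
        ∑ k ∈ range (m+1),
          ((w.choose k * (urnT W0 B0 m c n - w).choose (m-k) : ℕ) : ℝ)
              / (((urnT W0 B0 m c n).choose m : ℕ) : ℝ)
            * ((w:ℝ) + (c:ℝ)*(k:ℝ))^s := by
  have hT1 : urnT W0 B0 m c (n+1) = urnT W0 B0 m c n + m * c := by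
    simp only [urnT]; ring
  rw [momM, hT1]
  simp only [massM, Finset.sum_mul]
  rw [Finset.sum_comm]
  apply Finset.sum_congr rfl
  intro w hw
  rw [Finset.mul_sum]
  rw [Finset.sum_comm]
  apply Finset.sum_congr rfl
  intro k hk
  have hmem : w + c * k ∈ range (urnT W0 B0 m c n + m * c + 1) := by
    simp only [Finset.mem_range] at hw hk ⊢
    have h1 : c * k ≤ c * m := Nat.mul_le_mul_left c (by omega)
    have h2 : c * m = m * c := Nat.mul_comm c m
    omega
  have hcg : ∀ v ∈ range (urnT W0 B0 m c n + m * c + 1),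
      (if v = w + c * k then
          massM W0 B0 m c n w *
            ((w.choose k : ℝ) * ((urnT W0 B0 m c n - w).choose (m - k) : ℝ)
              / ((urnT W0 B0 m c n).choose m : ℝ)) else 0) * (v:ℝ)^s
      = if v = w + c * k then
          massM W0 B0 m c n w *
            (((w.choose k * (urnT W0 B0 m c n - w).choose (m - k) : ℕ):ℝ)
                / (((urnT W0 B0 m c n).choose m : ℕ):ℝ)
              * ((w:ℝ) + (c:ℝ)*(k:ℝ))^s) else 0 := by
    intro v hv
    split
    · rename_i hveq
      subst hveq
      push_cast
      ring
    · ring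
  rw [Finset.sum_congr rfl hcg,
    Finset.sum_ite_eq' (range (urnT W0 B0 m c n + m*c + 1)) (w + c*k)]
  rw [if_pos hmem]

lemma urn_inner (T w m s c : ℕ) (hw : w ≤ T) (hm : m ≤ T) :
    ∑ k ∈ range (m+1),
        ((w.choose k * (T - w).choose (m-k) : ℕ) : ℝ) / ((T.choose m : ℕ) : ℝ)
          * ((w:ℝ) + (c:ℝ)*(k:ℝ))^s
      = ∑ ℓ ∈ range (s+1), ∑ j ∈ range (ℓ+1), ∑ r ∈ range (j+1),
          (s.choose ℓ : ℝ) * (c:ℝ)^ℓ * (stirling2 ℓ j : ℝ)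
            * ((m.choose j : ℝ) / (T.choose j : ℝ))
            * ((-1:ℝ)^(j-r) * (stirling1 j r : ℝ)) * (w:ℝ)^((s-ℓ)+r) := by
  have hpow2 : ∀ (k ℓ : ℕ), ((k:ℝ))^ℓ
      = ∑ j ∈ range (ℓ+1), (stirling2 ℓ j : ℝ) * (k.descFactorial j : ℝ) := by
    intro k ℓ
    have := urn_pow_eq_sum_stirling2 k ℓ
    exact_mod_cast congrArg (fun x : ℕ => (x : ℝ)) this
  -- reduce RHS to double sum
  have hrhs : ∑ ℓ ∈ range (s+1), ∑ j ∈ range (ℓ+1), ∑ r ∈ range (j+1),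
          (s.choose ℓ : ℝ) * (c:ℝ)^ℓ * (stirling2 ℓ j : ℝ)
            * ((m.choose j : ℝ) / (T.choose j : ℝ))
            * ((-1:ℝ)^(j-r) * (stirling1 j r : ℝ)) * (w:ℝ)^((s-ℓ)+r)
      = ∑ ℓ ∈ range (s+1), ∑ j ∈ range (ℓ+1),
          (s.choose ℓ : ℝ) * (c:ℝ)^ℓ * (stirling2 ℓ j : ℝ)
            * ((m.choose j : ℝ) / (T.choose j : ℝ))
            * (w.descFactorial j : ℝ) * (w:ℝ)^(s-ℓ) := by
    apply Finset.sum_congr rfl; intro ℓ _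
    apply Finset.sum_congr rfl; intro j _
    rw [urn_descFactorial_eq_sum_stirling1 w j, Finset.mul_sum, Finset.sum_mul]
    apply Finset.sum_congr rfl; intro r _
    rw [pow_add]
    ring
  rw [hrhs]
  -- expand LHS
  have e1 : ∀ k ∈ range (m+1),
      ((w.choose k * (T - w).choose (m-k) : ℕ) : ℝ) / ((T.choose m : ℕ) : ℝ)
          * ((w:ℝ) + (c:ℝ)*(k:ℝ))^s
        = ∑ ℓ ∈ range (s+1), ∑ j ∈ range (ℓ+1),
            ((w.choose k * (T - w).choose (m-k) : ℕ) : ℝ) / ((T.choose m : ℕ) : ℝ)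
              * (k.descFactorial j : ℝ)
              * ((s.choose ℓ : ℝ) * (c:ℝ)^ℓ * (stirling2 ℓ j : ℝ) * (w:ℝ)^(s-ℓ)) := by
    intro k _
    rw [add_comm ((w:ℝ)), add_pow, Finset.mul_sum]
    apply Finset.sum_congr rfl; intro ℓ _
    rw [mul_pow, hpow2 k ℓ, Finset.mul_sum, Finset.sum_mul, Finset.sum_mul, Finset.mul_sum]
    apply Finset.sum_congr rfl; intro j _
    ring
  rw [Finset.sum_congr rfl e1]
  rw [Finset.sum_comm]
  apply Finset.sum_congr rfl; intro ℓ _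
  rw [Finset.sum_comm]
  apply Finset.sum_congr rfl; intro j _
  rw [← Finset.sum_mul, urn_hyp_falling_real T w m j hw hm]
  ring

lemma urn_mom_triple (W0 B0 m c s n : ℕ) (hm : m ≤ urnT W0 B0 m c n) :
    momM W0 B0 m c s (n+1) =
      ∑ ℓ ∈ range (s+1), ∑ j ∈ range (ℓ+1), ∑ r ∈ range (j+1),
        (s.choose ℓ : ℝ) * (c:ℝ)^ℓ * (stirling2 ℓ j : ℝ)
          * ((m.choose j : ℝ) / ((urnT W0 B0 m c n).choose j : ℝ))
          * ((-1:ℝ)^(j-r) * (stirling1 j r : ℝ)) * momM W0 B0 m c ((s-ℓ)+r) n := by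
  rw [urn_momM_succ]
  have e1 : ∀ w ∈ range (urnT W0 B0 m c n + 1),
      massM W0 B0 m c n w *
        ∑ k ∈ range (m+1),
          ((w.choose k * (urnT W0 B0 m c n - w).choose (m-k) : ℕ) : ℝ)
              / (((urnT W0 B0 m c n).choose m : ℕ) : ℝ)
            * ((w:ℝ) + (c:ℝ)*(k:ℝ))^s
      = ∑ ℓ ∈ range (s+1), ∑ j ∈ range (ℓ+1), ∑ r ∈ range (j+1),
          (s.choose ℓ : ℝ) * (c:ℝ)^ℓ * (stirling2 ℓ j : ℝ)
            * ((m.choose j : ℝ) / ((urnT W0 B0 m c n).choose j : ℝ))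
            * ((-1:ℝ)^(j-r) * (stirling1 j r : ℝ))
            * (massM W0 B0 m c n w * (w:ℝ)^((s-ℓ)+r)) := by
    intro w hw
    rw [urn_inner (urnT W0 B0 m c n) w m s c (by simpa using Nat.lt_succ_iff.1 (mem_range.1 hw)) hm]
    rw [Finset.mul_sum]
    apply Finset.sum_congr rfl; intro ℓ _
    rw [Finset.mul_sum]
    apply Finset.sum_congr rfl; intro j _
    rw [Finset.mul_sum]
    apply Finset.sum_congr rfl; intro r _
    ring
  rw [Finset.sum_congr rfl e1, Finset.sum_comm]
  apply Finset.sum_congr rfl; intro ℓ _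
  rw [Finset.sum_comm]
  apply Finset.sum_congr rfl; intro j _
  rw [Finset.sum_comm]
  apply Finset.sum_congr rfl; intro r _
  rw [← Finset.mul_sum, momM]

lemma urn_reassemble (s m c : ℕ) (CT : ℕ → ℝ) (mom : ℕ → ℝ) :
    ∑ ℓ ∈ range (s+1), ∑ j ∈ range (ℓ+1), ∑ r ∈ range (j+1),
        (s.choose ℓ:ℝ) * (c:ℝ)^ℓ * (stirling2 ℓ j:ℝ) * ((m.choose j:ℝ)/CT j)
          * ((-1:ℝ)^(j-r) * (stirling1 j r:ℝ)) * mom ((s-ℓ)+r)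
    = (∑ ℓ ∈ range (s+1), (c:ℝ)^ℓ * ((s.choose ℓ:ℝ) * (m.choose ℓ:ℝ)) / CT ℓ) * mom s
      + ∑ i ∈ Icc 2 s, mom (s+1-i) *
          ∑ ℓ ∈ Icc i s, (s.choose ℓ:ℝ) * (c:ℝ)^ℓ *
            ∑ j ∈ Icc (ℓ+1-i) ℓ, (-1:ℝ)^(j+i-1-ℓ) *
              ((stirling2 ℓ j:ℝ) * (stirling1 j (ℓ+1-i):ℝ) * (m.choose j:ℝ)) / CT j := by
  set G : ℕ → ℕ → ℕ → ℝ := fun ℓ j r =>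
    (s.choose ℓ:ℝ) * (c:ℝ)^ℓ * (stirling2 ℓ j:ℝ) * ((m.choose j:ℝ)/CT j)
      * ((-1:ℝ)^(j-r) * (stirling1 j r:ℝ)) * mom ((s-ℓ)+r) with hG
  -- Step 1: per ℓ, reorganize double sum
  have step1 : ∀ ℓ, ∑ j ∈ range (ℓ+1), ∑ r ∈ range (j+1), G ℓ j r
      = ∑ r ∈ range (ℓ+1), ∑ j ∈ Icc r ℓ, G ℓ j r := by
    intro ℓ
    have e1 : ∀ j ∈ range (ℓ+1), ∑ r ∈ range (j+1), G ℓ j r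
        = ∑ r ∈ range (ℓ+1), G ℓ j r := by
      intro j hj
      apply Finset.sum_subset
      · exact Finset.range_subset_range.2 (by simp at hj; omega)
      · intro r _ hr
        simp only [Finset.mem_range, not_lt] at hr
        simp only [hG, stirling1_eq_zero (by omega : j < r)]
        push_cast; ring
    rw [Finset.sum_congr rfl e1, Finset.sum_comm]
    apply Finset.sum_congr rfl
    intro r hr
    symm
    apply Finset.sum_subset
    · intro j hj; simp only [Finset.mem_Icc] at hj; simp; omega
    · intro j hj hj2
      simp only [Finset.mem_range] at hj
      simp only [Finset.mem_Icc, not_and, not_le] at hj2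
      have hjr : j < r := by by_contra h; push_neg at h; exact absurd (hj2 h) (by omega)
      simp only [hG, stirling1_eq_zero hjr]
      push_cast; ring
  -- Step 2: split off r = ℓ
  have step2 : ∀ ℓ ∈ range (s+1), ∑ j ∈ range (ℓ+1), ∑ r ∈ range (j+1), G ℓ j r
      = (∑ r ∈ range ℓ, ∑ j ∈ Icc r ℓ, G ℓ j r)
        + (c:ℝ)^ℓ * ((s.choose ℓ:ℝ) * (m.choose ℓ:ℝ)) / CT ℓ * mom s := by
    intro ℓ hℓ
    rw [step1 ℓ, Finset.sum_range_succ]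
    congr 1
    rw [Finset.Icc_self, Finset.sum_singleton, hG]
    simp only [stirling2_self, stirling1_self]
    have : (s-ℓ)+ℓ = s := by simp at hℓ; omega
    rw [this, Nat.sub_self]
    push_cast
    ring
  rw [Finset.sum_congr rfl step2, Finset.sum_add_distrib, ← Finset.sum_mul]
  have halpha : ∑ ℓ ∈ range (s+1), (c:ℝ)^ℓ * ((s.choose ℓ:ℝ) * (m.choose ℓ:ℝ)) / CT ℓ * mom s
      = (∑ ℓ ∈ range (s+1), (c:ℝ)^ℓ * ((s.choose ℓ:ℝ) * (m.choose ℓ:ℝ)) / CT ℓ) * mom s := by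
    rw [Finset.sum_mul]
  rw [add_comm]
  congr 1
  -- β part
  have step3 : ∀ ℓ ∈ range (s+1), ∑ r ∈ range ℓ, ∑ j ∈ Icc r ℓ, G ℓ j r
      = ∑ i ∈ Ico 2 (ℓ+1), ∑ j ∈ Icc (ℓ+1-i) ℓ, G ℓ j (ℓ+1-i) := by
    intro ℓ _
    have h0 : ∑ r ∈ range ℓ, ∑ j ∈ Icc r ℓ, G ℓ j r
        = ∑ r ∈ Ico 1 ℓ, ∑ j ∈ Icc r ℓ, G ℓ j r := by
      symm
      apply Finset.sum_subset
      · intro r hr; simp only [Finset.mem_Ico] at hr; simp; omega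
      · intro r hr hr2
        have hr0 : r = 0 := by
          simp only [Finset.mem_range] at hr; simp only [Finset.mem_Ico, not_and, not_lt] at hr2
          omega
        have hℓ1 : 1 ≤ ℓ := by simp only [Finset.mem_range] at hr; omega
        subst hr0
        apply Finset.sum_eq_zero
        intro j _
        cases j with
        | zero =>
          obtain ⟨ℓ', rfl⟩ : ∃ ℓ', ℓ = ℓ' + 1 := ⟨ℓ - 1, by omega⟩
          simp only [hG, stirling2_zero_right]
          push_cast; ring
        | succ j =>
          simp only [hG, stirling1_zero_right]
          push_cast; ring
    rw [h0]
    apply Finset.sum_nbij' (i := fun r => ℓ+1-r) (j := fun i => ℓ+1-i)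
    · intro r hr; simp only [Finset.mem_Ico] at hr ⊢; omega
    · intro i hi; simp only [Finset.mem_Ico] at hi ⊢; omega
    · intro r hr; simp only [Finset.mem_Ico] at hr; omega
    · intro i hi; simp only [Finset.mem_Ico] at hi; omega
    · intro r hr
      have : ℓ + 1 - (ℓ + 1 - r) = r := by simp only [Finset.mem_Ico] at hr; omega
      rw [this]
  rw [Finset.sum_congr rfl step3]
  have step4 : ∑ ℓ ∈ range (s+1), ∑ i ∈ Ico 2 (ℓ+1), ∑ j ∈ Icc (ℓ+1-i) ℓ, G ℓ j (ℓ+1-i)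
      = ∑ ℓ ∈ Ico 2 (s+1), ∑ i ∈ Ico 2 (ℓ+1), ∑ j ∈ Icc (ℓ+1-i) ℓ, G ℓ j (ℓ+1-i) := by
    symm
    apply Finset.sum_subset
    · intro ℓ hℓ; simp only [Finset.mem_Ico] at hℓ; simp; omega
    · intro ℓ hℓ hℓ2
      have : ℓ + 1 ≤ 2 := by
        simp only [Finset.mem_range] at hℓ; simp only [Finset.mem_Ico, not_and, not_lt] at hℓ2
        omega
      rw [Finset.Ico_eq_empty (by omega), Finset.sum_empty]
  rw [step4, ← Finset.sum_Ico_Ico_comm 2 (s+1)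
    (fun i ℓ => ∑ j ∈ Icc (ℓ+1-i) ℓ, G ℓ j (ℓ+1-i))]
  rw [Finset.Ico_add_one_right_eq_Icc]
  apply Finset.sum_congr rfl
  intro i hi
  rw [Finset.Ico_add_one_right_eq_Icc, Finset.mul_sum]
  apply Finset.sum_congr rfl
  intro ℓ hℓ
  rw [Finset.mul_sum, Finset.mul_sum]
  apply Finset.sum_congr rfl
  intro j hj
  simp only [Finset.mem_Icc] at hi hℓ hj
  have e1 : j - (ℓ + 1 - i) = j + i - 1 - ℓ := by omega
  have e2 : (s - ℓ) + (ℓ + 1 - i) = s + 1 - i := by omega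
  simp only [hG, e1, e2]
  ring

/-- In model `M`, for `n ≥ 1` and `s ≥ 1` the `s`-th moment satisfies the recurrence
`E(W_n^s) = α_{n−1,s}·E(W_{n−1}^s) + β_{n−1,s}`. -/
theorem modelM_moment_recurrence (W0 B0 m c : ℕ) (hm : 1 ≤ m) (hc : 1 ≤ c)
    (hW0 : 1 ≤ W0) (hB0 : 1 ≤ B0) (hT0 : m ≤ W0 + B0) :
    ∀ n s : ℕ, 1 ≤ n → 1 ≤ s →
      momM W0 B0 m c s n =
        alphaM W0 B0 m c (n - 1) s * momM W0 B0 m c s (n - 1) + betaM W0 B0 m c (n - 1) s := by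
  intro n s hn hs
  obtain ⟨n', rfl⟩ : ∃ n', n = n' + 1 := ⟨n - 1, by omega⟩
  simp only [Nat.add_sub_cancel]
  have hmT : m ≤ urnT W0 B0 m c n' := le_trans hT0 (Nat.le_add_right _ _)
  rw [urn_mom_triple W0 B0 m c s n' hmT]
  have hre := urn_reassemble s m c (fun j => (((urnT W0 B0 m c n').choose j : ℕ) : ℝ))
    (fun p => momM W0 B0 m c p n')
  rw [hre]
  simp only [alphaM, betaM]
end

section
/- In model M, for every s ≥ 1 the limit lim_{n→∞} E(W_n^s)/n^s exists and is finite; moreover E(W_n^s) ≤ (n·m·c + T_0)^s for all n, so the almost-sure limit W_∞ of W_n/T_n has moments E(W_∞^s) = lim_{n→∞} E(W_n^s)/(n·m·c)^s and its distribution is uniquely determined by these moments. -/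
open MeasureTheory Filter
open scoped ENNReal NNReal

lemma vandermonde_range (w u m : ℕ) :
    ∑ k ∈ Finset.range (m + 1), w.choose k * u.choose (m - k) = (w + u).choose m := by
  rw [Nat.add_choose_eq, Finset.Nat.sum_antidiagonal_eq_sum_range_succ_mk]

lemma weighted_vandermonde (w u m : ℕ) (hm : 1 ≤ m) :
    ∑ k ∈ Finset.range (m + 1), k * (w.choose k * u.choose (m - k))
      = w * (w - 1 + u).choose (m - 1) := by
  rw [Finset.sum_range_succ']
  simp only [Nat.zero_eq, zero_mul, add_zero, Nat.choose_zero_right]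
  have hterm : ∀ j, (j + 1) * (w.choose (j + 1) * u.choose (m - (j + 1)))
      = w * ((w - 1).choose j * u.choose (m - 1 - j)) := by
    intro j
    have h1 : m - (j + 1) = m - 1 - j := by omega
    rw [h1]
    rcases Nat.eq_zero_or_pos w with hw | hw
    · subst hw; simp
    · obtain ⟨v, rfl⟩ : ∃ v, w = v + 1 := ⟨w - 1, by omega⟩
      have hv : v + 1 - 1 = v := by omega
      rw [hv]
      have hq : (j + 1) * (v + 1).choose (j + 1) = (v + 1) * v.choose j := by
        have := Nat.add_one_mul_choose_eq v j
        rw [this, mul_comm]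
      rw [← mul_assoc, hq, mul_assoc]
  calc ∑ j ∈ Finset.range m, (j + 1) * (w.choose (j + 1) * u.choose (m - (j + 1)))
      = ∑ j ∈ Finset.range m, w * ((w - 1).choose j * u.choose (m - 1 - j)) :=
        Finset.sum_congr rfl fun j _ => hterm j
    _ = w * ∑ j ∈ Finset.range m, (w - 1).choose j * u.choose (m - 1 - j) := by
        rw [Finset.mul_sum]
    _ = w * (w - 1 + u).choose (m - 1) := by
        congr 1
        have hm' : m = (m - 1) + 1 := by omega
        rw [hm', Nat.add_sub_cancel]
        exact vandermonde_range _ _ _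

lemma urn_nat_identity (w T m c : ℕ) (hm : 1 ≤ m) (hmT : m ≤ T) (hwT : w ≤ T) :
    T * ∑ k ∈ Finset.range (m + 1), (w + c * k) * (w.choose k * (T - w).choose (m - k))
      = w * (T + m * c) * T.choose m := by
  have hvdm : ∑ k ∈ Finset.range (m + 1), w.choose k * (T - w).choose (m - k) = T.choose m := by
    rw [vandermonde_range]; congr 1; omega
  have hwv : ∑ k ∈ Finset.range (m + 1), k * (w.choose k * (T - w).choose (m - k))
      = w * (T - 1).choose (m - 1) := by
    rw [weighted_vandermonde _ _ _ hm]
    rcases Nat.eq_zero_or_pos w with hw | hw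
    · simp [hw]
    · congr 2; omega
  have hsum : ∑ k ∈ Finset.range (m + 1), (w + c * k) * (w.choose k * (T - w).choose (m - k))
      = w * T.choose m + c * (w * (T - 1).choose (m - 1)) := by
    rw [← hvdm, ← hwv, Finset.mul_sum, Finset.mul_sum, ← Finset.sum_add_distrib]
    apply Finset.sum_congr rfl
    intro k _
    ring
  rw [hsum]
  have hTm : T * (T - 1).choose (m - 1) = m * T.choose m := by
    obtain ⟨T', rfl⟩ : ∃ T', T = T' + 1 := ⟨T - 1, by omega⟩
    obtain ⟨m', rfl⟩ : ∃ m', m = m' + 1 := ⟨m - 1, by omega⟩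
    simp only [Nat.add_sub_cancel]
    have := Nat.add_one_mul_choose_eq T' m'
    rw [this, mul_comm]
  have expand : T * (w * T.choose m + c * (w * (T - 1).choose (m - 1)))
      = w * T * T.choose m + w * c * (T * (T - 1).choose (m - 1)) := by ring
  rw [expand, hTm]
  ring

lemma urn_real_identity (w T m c : ℕ) (hm : 1 ≤ m) (hmT : m ≤ T) (hwT : w ≤ T) :
    ∑ k ∈ Finset.range (m + 1), ((w : ℝ) + c * k) *
        ((w.choose k * (T - w).choose (m - k) : ℝ) / (T.choose m : ℝ))
      = (w : ℝ) * ((T : ℝ) + m * c) / T := by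
  have hT : 0 < T := lt_of_lt_of_le hm hmT
  have hC : ((T.choose m : ℝ)) ≠ 0 := by
    have := Nat.choose_pos hmT
    positivity
  have hTr : (T : ℝ) ≠ 0 := by positivity
  have key := urn_nat_identity w T m c hm hmT hwT
  have key' : (T : ℝ) * ∑ k ∈ Finset.range (m + 1),
      ((w : ℝ) + c * k) * ((w.choose k : ℝ) * ((T - w).choose (m - k) : ℝ))
      = (w : ℝ) * ((T : ℝ) + m * c) * (T.choose m : ℝ) := by
    exact_mod_cast congrArg (fun x : ℕ => (x : ℝ)) key
  have hsum : ∑ k ∈ Finset.range (m + 1), ((w : ℝ) + c * k) *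
        ((w.choose k * (T - w).choose (m - k) : ℝ) / (T.choose m : ℝ))
      = (∑ k ∈ Finset.range (m + 1),
          ((w : ℝ) + c * k) * ((w.choose k : ℝ) * ((T - w).choose (m - k) : ℝ)))
        / (T.choose m : ℝ) := by
    rw [Finset.sum_div]
    apply Finset.sum_congr rfl
    intro k _
    push_cast
    ring
  rw [hsum, div_eq_div_iff hC hTr, mul_comm]
  exact key'


set_option maxHeartbeats 2000000 in
/-- In model `M`, for every `s ≥ 1` the limit `lim_{n→∞} E(W_n^s)/n^s` exists and is
finite; moreover `E(W_n^s) ≤ (n·m·c + T_0)^s`, the almost-sure limit `W_∞` of `W_n/T_n`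
has moments `E(W_∞^s) = lim_{n→∞} E(W_n^s)/(n·m·c)^s`, and the distribution of `W_∞` is
uniquely determined by these moments. -/
theorem modelM_moment_convergence
    {Ω : Type*} {mΩ : MeasurableSpace Ω} (μ : Measure Ω) [IsProbabilityMeasure μ]
    (ℱ : Filtration ℕ mΩ)
    (W0 B0 m c : ℕ) (hm : 1 ≤ m) (hc : 1 ≤ c) (hW0 : 1 ≤ W0) (hB0 : 1 ≤ B0)
    (hT0 : m ≤ W0 + B0)
    (W : ℕ → Ω → ℕ)
    (hinit : ∀ ω, W 0 ω = W0)
    (hadapt : Adapted ℱ (fun n ω => (W n ω : ℝ)))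
    (hbnd : ∀ n ω, W n ω ≤ urnT W0 B0 m c n)
    (hmove : ∀ n, ∀ᵐ ω ∂μ, ∃ k ≤ m, W (n + 1) ω = W n ω + c * k)
    (hstep : ∀ n, ∀ k ≤ m,
      μ[fun ω => if W (n + 1) ω = W n ω + c * k then (1 : ℝ) else 0|ℱ n] =ᵐ[μ]
        fun ω => (Nat.choose (W n ω) k *
            Nat.choose (urnT W0 B0 m c n - W n ω) (m - k) : ℝ) /
          (Nat.choose (urnT W0 B0 m c n) m : ℝ)) :
    (∀ s : ℕ, 1 ≤ s → ∀ n : ℕ,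
      (∫ ω, (W n ω : ℝ) ^ s ∂μ) ≤ ((n : ℝ) * m * c + ((W0 : ℝ) + B0)) ^ s) ∧
    (∀ s : ℕ, 1 ≤ s → ∃ L : ℝ,
      Tendsto (fun n : ℕ => (∫ ω, (W n ω : ℝ) ^ s ∂μ) / (n : ℝ) ^ s) atTop (nhds L)) ∧
    ∃ Wlim : Ω → ℝ, Measurable Wlim ∧
      (∀ᵐ ω ∂μ, Tendsto (fun n => (W n ω : ℝ) / (urnT W0 B0 m c n : ℝ)) atTop
        (nhds (Wlim ω))) ∧
      (∀ s : ℕ, 1 ≤ s →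
        Tendsto (fun n : ℕ => (∫ ω, (W n ω : ℝ) ^ s ∂μ) / ((n : ℝ) * m * c) ^ s) atTop
          (nhds (∫ ω, (Wlim ω) ^ s ∂μ))) ∧
      (∀ ν : Measure ℝ, IsProbabilityMeasure ν →
        (∀ s : ℕ, 1 ≤ s → (∫ x, x ^ s ∂ν) = ∫ ω, (Wlim ω) ^ s ∂μ) →
        ν = Measure.map Wlim μ) := by
  classical
  set T : ℕ → ℕ := urnT W0 B0 m c with hTdef
  have hTval : ∀ n, T n = W0 + B0 + n * m * c := fun n => rfl
  have hTm : ∀ n, m ≤ T n := fun n => by rw [hTval]; omega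
  have hTpos : ∀ n, 0 < T n := fun n => lt_of_lt_of_le hm (hTm n)
  have hTrpos : ∀ n, (0 : ℝ) < (T n : ℝ) := fun n => by exact_mod_cast hTpos n
  have hTsucc : ∀ n, T (n + 1) = T n + m * c := fun n => by rw [hTval, hTval]; ring
  set X : ℕ → Ω → ℝ := fun n ω => (W n ω : ℝ) / (T n : ℝ) with hXdef
  have hWsm : ∀ n, StronglyMeasurable (fun ω => (W n ω : ℝ)) :=
    fun n => ((hadapt n).mono (ℱ.le n) le_rfl).stronglyMeasurable
  have hXadapted : StronglyAdapted ℱ X := by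
    intro n
    have hre : X n = fun ω => (W n ω : ℝ) * ((T n : ℝ))⁻¹ := by
      funext ω; simp only [hXdef, div_eq_mul_inv]
    rw [hre]
    exact (hadapt n).stronglyMeasurable.mul stronglyMeasurable_const
  have hXsm : ∀ n, StronglyMeasurable (X n) := fun n => (hXadapted n).mono (ℱ.le n)
  have hX01 : ∀ n ω, X n ω ∈ Set.Icc (0 : ℝ) 1 := by
    intro n ω
    constructor
    · positivity
    · rw [div_le_one (hTrpos n)]
      exact_mod_cast hbnd n ω
  have hXint : ∀ n, Integrable (X n) μ := by
    intro n
    refine (integrable_const (1 : ℝ)).mono' (hXsm n).aestronglyMeasurable ?_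
    refine ae_of_all _ fun ω => ?_
    rw [Real.norm_eq_abs, abs_of_nonneg (hX01 n ω).1]
    exact (hX01 n ω).2
  -- conditional expectation computation
  have hE : ∀ n, μ[fun ω => (W (n + 1) ω : ℝ)|ℱ n] =ᵐ[μ]
      fun ω => (W n ω : ℝ) * ((T (n + 1) : ℝ) / (T n : ℝ)) := by
    intro n
    set I : ℕ → Ω → ℝ := fun k ω => if W (n + 1) ω = W n ω + c * k then (1 : ℝ) else 0
      with hIdef
    set F : ℕ → Ω → ℝ := fun k => (fun ω => (W n ω : ℝ) + ((c * k : ℕ) : ℝ)) * I k with hFdef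
    have hAmeas : ∀ k : ℕ, MeasurableSet {ω | W (n + 1) ω = W n ω + c * k} := by
      intro k
      have hset : {ω | W (n + 1) ω = W n ω + c * k}
          = {ω | (W (n + 1) ω : ℝ) = (W n ω : ℝ) + ((c * k : ℕ) : ℝ)} := by
        ext ω
        simp only [Set.mem_setOf_eq, ← Nat.cast_add, Nat.cast_inj]
      rw [hset]
      exact measurableSet_eq_fun (hWsm (n + 1)).measurable
        ((hWsm n).measurable.add_const _)
    have hIsm : ∀ k : ℕ, StronglyMeasurable (I k) := fun k =>
      StronglyMeasurable.ite (hAmeas k) stronglyMeasurable_const stronglyMeasurable_const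
    have hIbd : ∀ k ω, ‖I k ω‖ ≤ 1 := by
      intro k ω
      simp only [hIdef]
      split <;> simp
    have hIint : ∀ k : ℕ, Integrable (I k) μ := fun k =>
      (integrable_const (1 : ℝ)).mono' (hIsm k).aestronglyMeasurable
        (ae_of_all _ (hIbd k))
    have hfksm : ∀ k : ℕ, StronglyMeasurable[ℱ n]
        (fun ω => (W n ω : ℝ) + ((c * k : ℕ) : ℝ)) := fun k =>
      (hadapt n).stronglyMeasurable.add stronglyMeasurable_const
    have hFint : ∀ k : ℕ, Integrable (F k) μ := by
      intro k
      refine (integrable_const ((T n : ℝ) + ((c * k : ℕ) : ℝ))).mono'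
        (((hfksm k).mono (ℱ.le n)).mul (hIsm k)).aestronglyMeasurable ?_
      refine ae_of_all _ fun ω => ?_
      simp only [hFdef, Pi.mul_apply, norm_mul]
      have h1 : ‖(W n ω : ℝ) + ((c * k : ℕ) : ℝ)‖ ≤ (T n : ℝ) + ((c * k : ℕ) : ℝ) := by
        rw [Real.norm_eq_abs, abs_of_nonneg (by positivity)]
        have : (W n ω : ℝ) ≤ (T n : ℝ) := by exact_mod_cast hbnd n ω
        linarith
      calc ‖(W n ω : ℝ) + ((c * k : ℕ) : ℝ)‖ * ‖I k ω‖
          ≤ ((T n : ℝ) + ((c * k : ℕ) : ℝ)) * 1 :=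
            mul_le_mul h1 (hIbd k ω) (norm_nonneg _) (by positivity)
        _ = (T n : ℝ) + ((c * k : ℕ) : ℝ) := mul_one _
    have hdecomp : (fun ω => (W (n + 1) ω : ℝ)) =ᵐ[μ]
        ∑ k ∈ Finset.range (m + 1), F k := by
      filter_upwards [hmove n] with ω hω
      obtain ⟨k0, hk0m, hk0⟩ := hω
      have hmem : k0 ∈ Finset.range (m + 1) := Finset.mem_range.mpr (by omega)
      rw [Finset.sum_apply]
      rw [Finset.sum_eq_single k0]
      · simp only [hFdef, hIdef, Pi.mul_apply, hk0, if_pos rfl, mul_one]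
        push_cast
        ring
      · intro k hk hne
        have hne' : ¬(W (n + 1) ω = W n ω + c * k) := by
          rw [hk0]
          intro h
          have : c * k0 = c * k := by omega
          exact hne (Nat.eq_of_mul_eq_mul_left hc this).symm
        simp only [hFdef, hIdef, Pi.mul_apply, if_neg hne', mul_zero]
      · intro h
        exact absurd hmem h
    have step1 : μ[fun ω => (W (n + 1) ω : ℝ)|ℱ n] =ᵐ[μ]
        μ[∑ k ∈ Finset.range (m + 1), F k|ℱ n] := condExp_congr_ae hdecomp
    have step2 : μ[∑ k ∈ Finset.range (m + 1), F k|ℱ n] =ᵐ[μ]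
        ∑ k ∈ Finset.range (m + 1), μ[F k|ℱ n] :=
      condExp_finsetSum (fun k _ => hFint k) _
    have step3 : ∀ k ∈ Finset.range (m + 1), μ[F k|ℱ n] =ᵐ[μ]
        fun ω => ((W n ω : ℝ) + ((c * k : ℕ) : ℝ)) *
          (((W n ω).choose k * (T n - W n ω).choose (m - k) : ℝ) / ((T n).choose m : ℝ)) := by
      intro k hk
      have hpull := condExp_mul_of_stronglyMeasurable_left (hfksm k) (hFint k) (hIint k)
      refine hpull.trans ?_
      filter_upwards [hstep n k (Nat.lt_succ_iff.mp (Finset.mem_range.mp hk))] with ω hω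
      simp only [Pi.mul_apply]
      rw [hω]
    have step4 : ∑ k ∈ Finset.range (m + 1), μ[F k|ℱ n] =ᵐ[μ]
        fun ω => (W n ω : ℝ) * ((T (n + 1) : ℝ) / (T n : ℝ)) := by
      have hae : ∀ᵐ ω ∂μ, ∀ k ∈ Finset.range (m + 1), (μ[F k|ℱ n]) ω =
          ((W n ω : ℝ) + ((c * k : ℕ) : ℝ)) *
            (((W n ω).choose k * (T n - W n ω).choose (m - k) : ℝ) / ((T n).choose m : ℝ)) :=
        (ae_ball_iff (Finset.range (m + 1)).countable_toSet).mpr fun k hk => step3 k hk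
      filter_upwards [hae] with ω hω
      rw [Finset.sum_apply]
      rw [Finset.sum_congr rfl hω]
      have hid := urn_real_identity (W n ω) (T n) m c hm (hTm n) (hbnd n ω)
      have hcast : ∀ k ∈ Finset.range (m + 1),
          ((W n ω : ℝ) + ((c * k : ℕ) : ℝ)) *
            (((W n ω).choose k * (T n - W n ω).choose (m - k) : ℝ) / ((T n).choose m : ℝ))
          = ((W n ω : ℝ) + (c : ℝ) * (k : ℝ)) *
            (((W n ω).choose k * (T n - W n ω).choose (m - k) : ℝ) / ((T n).choose m : ℝ)) := by
        intro k _
        push_cast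
        ring
      rw [Finset.sum_congr rfl hcast, hid]
      rw [hTsucc n]
      push_cast
      rw [mul_div_assoc]
    exact step1.trans (step2.trans step4)
  -- the martingale
  have hXmart : Martingale X ℱ μ := by
    refine martingale_nat hXadapted hXint fun n => ?_
    have h1 : X (n + 1) = ((T (n + 1) : ℝ))⁻¹ • (fun ω => (W (n + 1) ω : ℝ)) := by
      funext ω
      simp only [hXdef, Pi.smul_apply, smul_eq_mul]
      rw [inv_mul_eq_div]
    have h2 : μ[X (n + 1)|ℱ n] =ᵐ[μ]
        ((T (n + 1) : ℝ))⁻¹ • (μ[fun ω => (W (n + 1) ω : ℝ)|ℱ n]) := by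
      rw [h1]; exact condExp_smul _ _ _
    refine EventuallyEq.symm (h2.trans ?_)
    have h3 : (T (n + 1) : ℝ) ≠ 0 := (hTrpos _).ne'
    have h4 : (T n : ℝ) ≠ 0 := (hTrpos _).ne'
    filter_upwards [hE n] with ω hω
    simp only [Pi.smul_apply, smul_eq_mul, hω, hXdef]
    field_simp
  -- L¹ bound and a.s. convergence
  have hbddL1 : ∀ n, eLpNorm (X n) 1 μ ≤ ((1 : ℝ≥0) : ℝ≥0∞) := by
    intro n
    have hb : ∀ᵐ ω ∂μ, ‖X n ω‖ ≤ (1 : ℝ) := ae_of_all _ fun ω => by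
      rw [Real.norm_eq_abs, abs_of_nonneg (hX01 n ω).1]; exact (hX01 n ω).2
    have := eLpNorm_le_of_ae_bound (p := 1) (μ := μ) hb
    simpa using this
  set Wlim : Ω → ℝ := ℱ.limitProcess X μ with hWlimdef
  have hWlimsm : StronglyMeasurable Wlim := Filtration.stronglyMeasurable_limit_process'
  have hWlimmeas : Measurable Wlim := hWlimsm.measurable
  have htends : ∀ᵐ ω ∂μ, Tendsto (fun n => X n ω) atTop (nhds (Wlim ω)) :=
    hXmart.submartingale.ae_tendsto_limitProcess hbddL1
  have hWlim01 : ∀ᵐ ω ∂μ, Wlim ω ∈ Set.Icc (0 : ℝ) 1 := by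
    filter_upwards [htends] with ω hω
    exact isClosed_Icc.mem_of_tendsto hω (Eventually.of_forall fun n => hX01 n ω)
  -- moment convergence of X
  have hXpowint : ∀ n s, Integrable (fun ω => X n ω ^ s) μ := by
    intro n s
    refine (integrable_const (1 : ℝ)).mono' ((hXsm n).pow s).aestronglyMeasurable ?_
    refine ae_of_all _ fun ω => ?_
    rw [Real.norm_eq_abs, abs_of_nonneg (pow_nonneg (hX01 n ω).1 s)]
    exact pow_le_one₀ (hX01 n ω).1 (hX01 n ω).2
  have hWlimpowint : ∀ s : ℕ, Integrable (fun ω => Wlim ω ^ s) μ := by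
    intro s
    refine (integrable_const (1 : ℝ)).mono' (hWlimsm.pow s).aestronglyMeasurable ?_
    filter_upwards [hWlim01] with ω hω
    rw [Real.norm_eq_abs, abs_of_nonneg (pow_nonneg hω.1 s)]
    exact pow_le_one₀ hω.1 hω.2
  have hMconv : ∀ s : ℕ, Tendsto (fun n => ∫ ω, X n ω ^ s ∂μ) atTop
      (nhds (∫ ω, Wlim ω ^ s ∂μ)) := by
    intro s
    refine tendsto_integral_of_dominated_convergence (bound := fun _ => (1 : ℝ))
      (fun n => ((hXsm n).pow s).aestronglyMeasurable) (integrable_const 1)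
      (fun n => ae_of_all _ fun ω => ?_) ?_
    · rw [Real.norm_eq_abs, abs_of_nonneg (pow_nonneg (hX01 n ω).1 s)]
      exact pow_le_one₀ (hX01 n ω).1 (hX01 n ω).2
    · filter_upwards [htends] with ω hω
      exact (hω.pow s)
  -- integral of X n is constant
  have hEX : ∀ n, ∫ ω, X n ω ∂μ = (W0 : ℝ) / ((W0 : ℝ) + (B0 : ℝ)) := by
    intro n
    induction n with
    | zero =>
      have : X 0 = fun _ => (W0 : ℝ) / ((W0 : ℝ) + (B0 : ℝ)) := by
        funext ω
        simp only [hXdef, hinit ω, hTval 0]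
        push_cast
        ring_nf
      rw [this, integral_const, probReal_univ]
      simp
    | succ n ih =>
      have h1 : ∫ ω, X (n + 1) ω ∂μ = ∫ ω, (μ[X (n + 1)|ℱ n]) ω ∂μ :=
        (integral_condExp (ℱ.le n)).symm
      have h2 : ∫ ω, (μ[X (n + 1)|ℱ n]) ω ∂μ = ∫ ω, X n ω ∂μ :=
        integral_congr_ae (hXmart.condExp_ae_eq (Nat.le_succ n))
      rw [h1, h2, ih]
  have hM1 : ∫ ω, Wlim ω ∂μ = (W0 : ℝ) / ((W0 : ℝ) + (B0 : ℝ)) := by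
    have h1 : Tendsto (fun n => ∫ ω, X n ω ^ 1 ∂μ) atTop (nhds (∫ ω, Wlim ω ^ 1 ∂μ)) :=
      hMconv 1
    simp only [pow_one] at h1
    exact tendsto_nhds_unique (h1.congr fun n => hEX n) tendsto_const_nhds
  -- relation between moments of W and of X
  have hWpow : ∀ n s, ∫ ω, (W n ω : ℝ) ^ s ∂μ = (T n : ℝ) ^ s * ∫ ω, X n ω ^ s ∂μ := by
    intro n s
    rw [← integral_const_mul]
    apply integral_congr_ae
    refine ae_of_all _ fun ω => ?_
    simp only [hXdef]
    rw [div_pow, mul_div_cancel₀]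
    exact pow_ne_zero _ (hTrpos n).ne'
  have hWint : ∀ n s, Integrable (fun ω => (W n ω : ℝ) ^ s) μ := by
    intro n s
    refine (integrable_const ((T n : ℝ) ^ s)).mono' ((hWsm n).pow s).aestronglyMeasurable ?_
    refine ae_of_all _ fun ω => ?_
    rw [Real.norm_eq_abs, abs_of_nonneg (by positivity)]
    exact pow_le_pow_left₀ (by positivity) (by exact_mod_cast hbnd n ω) s
  have hmc : (0 : ℝ) < (m : ℝ) * (c : ℝ) := by
    have h1 : (1 : ℝ) ≤ (m : ℝ) := by exact_mod_cast hm
    have h2 : (1 : ℝ) ≤ (c : ℝ) := by exact_mod_cast hc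
    nlinarith
  have hratio : Tendsto (fun n : ℕ => (T n : ℝ) / ((n : ℝ) * m * c)) atTop (nhds 1) := by
    have h0 : Tendsto (fun n : ℕ => ((W0 : ℝ) + B0) / ((n : ℝ) * m * c)) atTop (nhds 0) := by
      have heq : (fun n : ℕ => ((W0 : ℝ) + B0) / ((n : ℝ) * m * c))
          = fun n : ℕ => (((W0 : ℝ) + B0) / ((m : ℝ) * c)) * ((n : ℝ))⁻¹ := by
        funext n
        simp only [div_eq_mul_inv, mul_inv]
        ring
      rw [heq]
      have h2 : Tendsto (fun n : ℕ => ((n : ℝ))⁻¹) atTop (nhds 0) :=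
        tendsto_inv_atTop_zero.comp tendsto_natCast_atTop_atTop
      simpa using h2.const_mul (((W0 : ℝ) + B0) / ((m : ℝ) * c))
    have heq2 : ∀ᶠ n : ℕ in atTop,
        ((W0 : ℝ) + B0) / ((n : ℝ) * m * c) + 1 = (T n : ℝ) / ((n : ℝ) * m * c) := by
      filter_upwards [eventually_ge_atTop 1] with n hn
      have hn1 : (1 : ℝ) ≤ (n : ℝ) := by exact_mod_cast hn
      have hd : ((n : ℝ) * m * c) ≠ 0 := by nlinarith
      rw [hTval n]
      push_cast
      field_simp
    have h3 := h0.add (tendsto_const_nhds (x := (1 : ℝ)) (f := atTop))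
    rw [zero_add] at h3
    exact Tendsto.congr' heq2 h3
  have hb3 : ∀ s : ℕ, Tendsto
      (fun n : ℕ => (∫ ω, (W n ω : ℝ) ^ s ∂μ) / ((n : ℝ) * m * c) ^ s) atTop
      (nhds (∫ ω, Wlim ω ^ s ∂μ)) := by
    intro s
    have hEq : ∀ n : ℕ, (∫ ω, (W n ω : ℝ) ^ s ∂μ) / ((n : ℝ) * m * c) ^ s
        = ((T n : ℝ) / ((n : ℝ) * m * c)) ^ s * ∫ ω, X n ω ^ s ∂μ := by
      intro n
      rw [hWpow n s, div_pow, div_mul_eq_mul_div]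
    have hlim : Tendsto (fun n : ℕ => ((T n : ℝ) / ((n : ℝ) * m * c)) ^ s * ∫ ω, X n ω ^ s ∂μ)
        atTop (nhds (1 ^ s * ∫ ω, Wlim ω ^ s ∂μ)) := (hratio.pow s).mul (hMconv s)
    rw [one_pow, one_mul] at hlim
    exact Tendsto.congr (fun n => (hEq n).symm) hlim
  refine ⟨?_, ?_, Wlim, hWlimmeas, htends, fun s _ => hb3 s, ?_⟩
  · -- bullet 1
    intro s hs n
    calc ∫ ω, (W n ω : ℝ) ^ s ∂μ ≤ ∫ _ω, (T n : ℝ) ^ s ∂μ := by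
          refine integral_mono (hWint n s) (integrable_const _) fun ω => ?_
          exact pow_le_pow_left₀ (by positivity) (by exact_mod_cast hbnd n ω : (W n ω : ℝ) ≤ T n) s
      _ = (T n : ℝ) ^ s := by rw [integral_const, probReal_univ]; simp
      _ = ((n : ℝ) * m * c + ((W0 : ℝ) + B0)) ^ s := by
          rw [hTval]; push_cast; ring_nf
  · -- bullet 2
    intro s hs
    refine ⟨(∫ ω, Wlim ω ^ s ∂μ) * ((m : ℝ) * c) ^ s, ?_⟩
    have h := (hb3 s).mul_const (((m : ℝ) * c) ^ s)
    refine h.congr fun n => ?_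
    have hpow : ((n : ℝ) * m * c) ^ s = (n : ℝ) ^ s * ((m : ℝ) * c) ^ s := by
      rw [mul_assoc, mul_pow]
    rw [hpow, ← div_div, div_mul_cancel₀]
    exact pow_ne_zero _ hmc.ne'
  · -- bullet 4 : moment determinacy
    intro ν hν hmom
    set η : Measure ℝ := Measure.map Wlim μ with hηdef
    have hηprob : IsProbabilityMeasure η := Measure.isProbabilityMeasure_map hWlimmeas.aemeasurable
    have hηmom : ∀ s : ℕ, ∫ x, x ^ s ∂η = ∫ ω, Wlim ω ^ s ∂μ := by
      intro s
      rw [hηdef]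
      exact integral_map hWlimmeas.aemeasurable
        ((continuous_pow s).measurable.aestronglyMeasurable)
    have hWlimpow_nonneg : ∀ s : ℕ, 0 ≤ᵐ[μ] fun ω => Wlim ω ^ s := by
      intro s
      filter_upwards [hWlim01] with ω hω
      exact pow_nonneg hω.1 s
    have hMle1 : ∀ s : ℕ, ∫ ω, Wlim ω ^ s ∂μ ≤ 1 := by
      intro s
      have h := integral_mono_ae (hWlimpowint s) (integrable_const (1 : ℝ)) ?_
      · simpa [measure_univ] using h
      · filter_upwards [hWlim01] with ω hω
        exact pow_le_one₀ hω.1 hω.2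
    have hMpos : ∀ s : ℕ, 1 ≤ s → 0 < ∫ ω, Wlim ω ^ s ∂μ := by
      intro s hs
      rcases (integral_nonneg_of_ae (hWlimpow_nonneg s)).lt_or_eq with h | h
      · exact h
      · exfalso
        have hzero := (integral_eq_zero_iff_of_nonneg_ae (hWlimpow_nonneg s)
          (hWlimpowint s)).mp h.symm
        have hW0' : Wlim =ᵐ[μ] 0 := by
          filter_upwards [hzero] with ω hω
          simpa using pow_eq_zero_iff (by omega : s ≠ 0) |>.mp hω
        have : ∫ ω, Wlim ω ∂μ = 0 := by
          rw [integral_congr_ae hW0']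
          simp
        rw [hM1] at this
        have hW0pos : (0 : ℝ) < (W0 : ℝ) := by exact_mod_cast hW0
        have hden : (0 : ℝ) < (W0 : ℝ) + (B0 : ℝ) := by
          have : (0 : ℝ) < (B0 : ℝ) := by exact_mod_cast hB0
          linarith
        rw [div_eq_zero_iff] at this
        rcases this with h1 | h1 <;> linarith
    have hνint : ∀ s : ℕ, 1 ≤ s → Integrable (fun x : ℝ => x ^ s) ν := by
      intro s hs
      by_contra h
      have h0 := integral_undef h
      rw [hmom s hs] at h0
      exact (hMpos s hs).ne' h0
    have hνint' : ∀ s : ℕ, Integrable (fun x : ℝ => x ^ s) ν := by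
      intro s
      rcases Nat.eq_zero_or_pos s with h | h
      · subst h
        simpa using (integrable_const (1 : ℝ) : Integrable (fun _ : ℝ => (1 : ℝ)) ν)
      · exact hνint s h
    have hηint : ∀ s : ℕ, Integrable (fun x : ℝ => x ^ s) η := by
      intro s
      rw [hηdef]
      exact (integrable_map_measure ((continuous_pow s).measurable.aestronglyMeasurable)
        hWlimmeas.aemeasurable).mpr (hWlimpowint s)
    have hmom' : ∀ s : ℕ, ∫ x, x ^ s ∂ν = ∫ x, x ^ s ∂η := by
      intro s
      rcases Nat.eq_zero_or_pos s with h | h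
      · subst h
        simp [measure_univ]
      · rw [hmom s h, hηmom s]
    set K : Set ℝ := Set.Icc (-1 : ℝ) 1 with hKdef
    have hηK : η Kᶜ = 0 := by
      rw [hηdef, Measure.map_apply hWlimmeas (measurableSet_Icc.compl)]
      refine measure_mono_null ?_ (ae_iff.mp hWlim01)
      intro ω hω
      simp only [Set.mem_preimage, Set.mem_compl_iff, hKdef, Set.mem_Icc] at hω
      simp only [Set.mem_setOf_eq, Set.mem_Icc]
      intro hcon
      exact hω ⟨by linarith [hcon.1], hcon.2⟩
    have hνK : ν Kᶜ = 0 := by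
      have hA : ∀ j : ℕ, ν {x : ℝ | 1 + ((j : ℝ) + 1)⁻¹ ≤ |x|} = 0 := by
        intro j
        set a : ℝ := 1 + ((j : ℝ) + 1)⁻¹ with hadef
        have hj1 : (0 : ℝ) < (j : ℝ) + 1 := by positivity
        have ha1 : 1 < a := by
          rw [hadef]
          have : (0 : ℝ) < ((j : ℝ) + 1)⁻¹ := by positivity
          linarith
        have ha0 : (0 : ℝ) < a := by linarith
        set A : Set ℝ := {x : ℝ | a ≤ |x|} with hAdef
        have hbound : ∀ s : ℕ, (ν A).toReal ≤ (a ^ (2 * s + 2))⁻¹ := by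
          intro s
          have hpow_nonneg : 0 ≤ᵐ[ν] fun x : ℝ => x ^ (2 * s + 2) := by
            refine ae_of_all _ fun x => ?_
            show (0 : ℝ) ≤ x ^ (2 * s + 2)
            have hre : x ^ (2 * s + 2) = (x ^ (s + 1)) ^ 2 := by ring
            rw [hre]
            exact sq_nonneg _
          have hcheb := mul_meas_ge_le_integral_of_nonneg hpow_nonneg
            (hνint (2 * s + 2) (by omega)) (a ^ (2 * s + 2))
          have hsub : A ⊆ {x : ℝ | a ^ (2 * s + 2) ≤ x ^ (2 * s + 2)} := by
            intro x hx
            simp only [hAdef, Set.mem_setOf_eq] at hx ⊢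
            have h1 : a ^ (2 * s + 2) ≤ |x| ^ (2 * s + 2) :=
              pow_le_pow_left₀ ha0.le hx _
            have h2 : |x| ^ (2 * s + 2) = x ^ (2 * s + 2) := by
              rw [← abs_pow, abs_of_nonneg]
              have : x ^ (2 * s + 2) = (x ^ (s + 1)) ^ 2 := by ring
              rw [this]; positivity
            rwa [h2] at h1
          have hmono : (ν A).toReal ≤ (ν {x : ℝ | a ^ (2 * s + 2) ≤ x ^ (2 * s + 2)}).toReal :=
            ENNReal.toReal_mono (measure_ne_top ν _) (measure_mono hsub)
          have hint_le : ∫ x, x ^ (2 * s + 2) ∂ν ≤ 1 := by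
            rw [hmom (2 * s + 2) (by omega)]
            exact hMle1 _
          have hapos : (0 : ℝ) < a ^ (2 * s + 2) := by positivity
          have h5 : a ^ (2 * s + 2) * (ν A).toReal ≤ 1 := by
            have h6 : a ^ (2 * s + 2) * (ν A).toReal
                ≤ a ^ (2 * s + 2) * (ν {x : ℝ | a ^ (2 * s + 2) ≤ x ^ (2 * s + 2)}).toReal :=
              mul_le_mul_of_nonneg_left hmono hapos.le
            exact h6.trans (hcheb.trans hint_le)
          calc (ν A).toReal = (a ^ (2 * s + 2) * (ν A).toReal) / a ^ (2 * s + 2) := by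
                field_simp
            _ ≤ 1 / a ^ (2 * s + 2) := by gcongr
            _ = (a ^ (2 * s + 2))⁻¹ := one_div _
        have h0 : (ν A).toReal = 0 := by
          have hlim : Tendsto (fun s : ℕ => (a ^ (2 * s + 2))⁻¹) atTop (nhds 0) := by
            have hq : ∀ s : ℕ, (a ^ (2 * s + 2))⁻¹ = (a ^ 2)⁻¹ * ((a ^ 2)⁻¹) ^ s := by
              intro s
              rw [show 2 * s + 2 = 2 * (s + 1) by ring, pow_mul, ← inv_pow, pow_succ']
            have ha2 : (a ^ 2 : ℝ)⁻¹ < 1 := by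
              rw [inv_lt_one₀ (by positivity)]
              nlinarith
            have ha2' : (0 : ℝ) ≤ (a ^ 2)⁻¹ := by positivity
            have := (tendsto_pow_atTop_nhds_zero_of_lt_one ha2' ha2).const_mul ((a ^ 2 : ℝ)⁻¹)
            rw [mul_zero] at this
            exact this.congr fun s => (hq s).symm
          have hle0 : (ν A).toReal ≤ 0 :=
            ge_of_tendsto hlim (Eventually.of_forall fun s => hbound s)
          exact le_antisymm hle0 ENNReal.toReal_nonneg
        have := (ENNReal.toReal_eq_zero_iff _).mp h0
        exact this.resolve_right (measure_ne_top ν A)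
      refine measure_mono_null ?_ (measure_iUnion_null hA)
      intro x hx
      simp only [hKdef, Set.mem_compl_iff, Set.mem_Icc, not_and_or, not_le] at hx
      have habs : 1 < |x| := by
        rcases hx with h | h
        · rw [abs_of_nonpos (by linarith)]; linarith
        · rw [abs_of_pos (by linarith)]; exact h
      obtain ⟨j, hj⟩ := exists_nat_gt (|x| - 1)⁻¹
      refine Set.mem_iUnion.mpr ⟨j, ?_⟩
      simp only [Set.mem_setOf_eq]
      have hpos : (0 : ℝ) < |x| - 1 := by linarith
      have hjpos : (0 : ℝ) < (j : ℝ) + 1 := by positivity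
      have : ((j : ℝ) + 1)⁻¹ ≤ |x| - 1 := by
        rw [inv_le_comm₀ hjpos hpos]
        have : ((|x| - 1)⁻¹ : ℝ) < (j : ℝ) := hj
        linarith
      linarith
    -- integrals of polynomials agree
    have hqsum : ∀ (σ : Measure ℝ), (∀ s : ℕ, Integrable (fun x : ℝ => x ^ s) σ) →
        ∀ q : Polynomial ℝ, ∫ x, Polynomial.eval x q ∂σ
          = ∑ i ∈ Finset.range (q.natDegree + 1), q.coeff i * ∫ x, x ^ i ∂σ := by
      intro σ hint q
      have h1 : ∫ x, Polynomial.eval x q ∂σ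
          = ∫ x, ∑ i ∈ Finset.range (q.natDegree + 1), q.coeff i * x ^ i ∂σ :=
        integral_congr_ae (ae_of_all _ fun x => Polynomial.eval_eq_sum_range x)
      rw [h1, integral_finset_sum _ fun i _ => (hint i).const_mul _]
      exact Finset.sum_congr rfl fun i _ => integral_const_mul _ _
    have hqint : ∀ (σ : Measure ℝ), (∀ s : ℕ, Integrable (fun x : ℝ => x ^ s) σ) →
        ∀ q : Polynomial ℝ, Integrable (fun x => Polynomial.eval x q) σ := by
      intro σ hint q
      have h1 : (fun x => Polynomial.eval x q)
          = fun x => ∑ i ∈ Finset.range (q.natDegree + 1), q.coeff i * x ^ i :=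
        funext fun x => Polynomial.eval_eq_sum_range x
      rw [h1]
      exact integrable_finset_sum _ fun i _ => (hint i).const_mul _
    have hpoly : ∀ q : Polynomial ℝ, ∫ x, Polynomial.eval x q ∂ν = ∫ x, Polynomial.eval x q ∂η := by
      intro q
      rw [hqsum ν hνint' q, hqsum η hηint q]
      exact Finset.sum_congr rfl fun i _ => by rw [hmom' i]
    -- continuous functions agree
    have haeK : ∀ (σ : Measure ℝ), σ Kᶜ = 0 → ∀ᵐ x ∂σ, x ∈ K := by
      intro σ hσ
      rw [ae_iff]
      rw [Set.compl_def] at hσ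
      exact hσ
    have hgint : ∀ (g : ℝ → ℝ), Continuous g → ∀ (σ : Measure ℝ) [IsProbabilityMeasure σ],
        σ Kᶜ = 0 → Integrable g σ := by
      intro g hg σ _ hσK
      obtain ⟨C, hC⟩ := IsCompact.exists_bound_of_continuousOn isCompact_Icc hg.continuousOn
      refine (integrable_const C).mono' hg.aestronglyMeasurable ?_
      filter_upwards [haeK σ hσK] with x hx
      exact hC x hx
    have hcont : ∀ g : ℝ → ℝ, Continuous g → ∫ x, g x ∂ν = ∫ x, g x ∂η := by
      intro g hg
      suffices h2 : ∀ ε : ℝ, 0 < ε → |∫ x, g x ∂ν - ∫ x, g x ∂η| ≤ 2 * ε by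
        by_contra hne
        have habs : 0 < |∫ x, g x ∂ν - ∫ x, g x ∂η| := abs_pos.mpr (sub_ne_zero.mpr hne)
        have := h2 (|∫ x, g x ∂ν - ∫ x, g x ∂η| / 4) (by positivity)
        linarith
      intro ε hε
      haveI : CompactSpace K := isCompact_iff_compactSpace.mp isCompact_Icc
      have hdense := polynomialFunctions_closure_eq_top (-1 : ℝ) 1
      set gK : C(K, ℝ) := ContinuousMap.restrict K ⟨g, hg⟩ with hgKdef
      have hmem : gK ∈ (polynomialFunctions K).topologicalClosure := by
        have htop : (polynomialFunctions K).topologicalClosure = ⊤ := hdense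
        rw [htop]; trivial
      have hmem' : gK ∈ closure ((polynomialFunctions K : Subalgebra ℝ C(K, ℝ)) :
          Set C(K, ℝ)) := hmem
      obtain ⟨p, hpmem, hpdist⟩ := Metric.mem_closure_iff.mp hmem' ε hε
      rw [polynomialFunctions_coe] at hpmem
      obtain ⟨q, hq⟩ := hpmem
      have happrox : ∀ x (hx : x ∈ K), |g x - Polynomial.eval x q| ≤ ε := by
        intro x hx
        have h1 := ContinuousMap.dist_apply_le_dist (f := gK) (g := p) ⟨x, hx⟩
        have h2 : p ⟨x, hx⟩ = Polynomial.eval x q := by rw [← hq]; rfl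
        have h3 : gK ⟨x, hx⟩ = g x := rfl
        rw [h2, h3, Real.dist_eq] at h1
        exact h1.trans hpdist.le
      have key : ∀ (σ : Measure ℝ) [IsProbabilityMeasure σ], σ Kᶜ = 0 →
          (∀ s : ℕ, Integrable (fun x : ℝ => x ^ s) σ) →
          |∫ x, g x ∂σ - ∫ x, Polynomial.eval x q ∂σ| ≤ ε := by
        intro σ _ hσK hσint
        rw [← integral_sub (hgint g hg σ hσK) (hqint σ hσint q)]
        have h1 : |∫ x, (g x - Polynomial.eval x q) ∂σ|
            ≤ ∫ x, |g x - Polynomial.eval x q| ∂σ := by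
          simpa [Real.norm_eq_abs] using
            norm_integral_le_integral_norm (fun x => g x - Polynomial.eval x q) (μ := σ)
        refine h1.trans ?_
        have h2 : ∫ x, |g x - Polynomial.eval x q| ∂σ ≤ ∫ _x, ε ∂σ := by
          refine integral_mono_ae ((hgint g hg σ hσK).sub (hqint σ hσint q)).abs
            (integrable_const ε) ?_
          filter_upwards [haeK σ hσK] with x hx
          exact happrox x hx
        simpa [measure_univ] using h2
      have h1 := key ν hνK hνint'
      have h2 := key η hηK hηint
      have h3 := hpoly q
      calc |∫ x, g x ∂ν - ∫ x, g x ∂η|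
          ≤ |∫ x, g x ∂ν - ∫ x, Polynomial.eval x q ∂ν|
            + |∫ x, Polynomial.eval x q ∂ν - ∫ x, g x ∂η| := abs_sub_le _ _ _
        _ ≤ ε + ε := by
            refine add_le_add h1 ?_
            rw [h3, abs_sub_comm]
            exact h2
        _ = 2 * ε := by ring
    -- conclude by uniqueness of finite measures against bounded continuous functions
    refine ext_of_forall_lintegral_eq_of_IsFiniteMeasure fun f => ?_
    have hfin1 : ∫⁻ x, (f x : ℝ≥0∞) ∂ν < ⊤ := BoundedContinuousFunction.lintegral_lt_top_of_nnreal ν f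
    have hfin2 : ∫⁻ x, (f x : ℝ≥0∞) ∂η < ⊤ := BoundedContinuousFunction.lintegral_lt_top_of_nnreal η f
    have h1 : (∫⁻ x, (f x : ℝ≥0∞) ∂ν).toReal = (∫⁻ x, (f x : ℝ≥0∞) ∂η).toReal := by
      rw [BoundedContinuousFunction.toReal_lintegral_coe_eq_integral,
        BoundedContinuousFunction.toReal_lintegral_coe_eq_integral]
      exact hcont (fun x => (f x : ℝ)) (NNReal.continuous_coe.comp f.continuous)
    exact (ENNReal.toReal_eq_toReal_iff' hfin1.ne hfin2.ne).mp h1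
end

section
/- For integers T ≥ m ≥ 1, 0 ≤ W ≤ T and ℓ ≥ 1, the ℓ-th moment of the hypergeometric distribution satisfies Σ_{k=1}^{m} k^ℓ · C(W,k)·C(T−W, m−k)/C(T,m) = Σ_{j=1}^{ℓ} S(ℓ,j) · W^{(j)} · C(m,j)/C(T,j), where W^{(j)} := W(W−1)···(W−j+1) is the falling factorial. -/
lemma stirling2_eq_zero_of_lt : ∀ {n k : ℕ}, n < k → stirling2 n k = 0
  | 0, k + 1, _ => rfl
  | n + 1, k + 1, h => by
      have h1 : n < k + 1 := by omega
      have h2 : n < k := by omega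
      simp [stirling2, stirling2_eq_zero_of_lt h1, stirling2_eq_zero_of_lt h2]

lemma mul_descFactorial (k j : ℕ) :
    k * k.descFactorial j = k.descFactorial (j + 1) + j * k.descFactorial j := by
  rw [Nat.descFactorial_succ]
  rcases le_or_gt j k with h | h
  · have : k - j + j = k := by omega
    nlinarith [Nat.sub_add_cancel h]
  · rw [Nat.descFactorial_eq_zero_iff_lt.2 h]; ring

lemma pow_eq_sum_stirling (k : ℕ) : ∀ ℓ : ℕ,
    k ^ ℓ = ∑ j ∈ Finset.range (ℓ + 1), stirling2 ℓ j * k.descFactorial j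
  | 0 => by simp [stirling2]
  | n + 1 => by
    have ih := pow_eq_sum_stirling k n
    have key : ∑ j ∈ Finset.range (n + 1), stirling2 n j * (j * k.descFactorial j) =
        ∑ j ∈ Finset.range (n + 1),
          ((j + 1) * stirling2 n (j + 1)) * k.descFactorial (j + 1) := by
      have h1 := Finset.sum_range_succ'
        (fun j => j * stirling2 n j * k.descFactorial j) (n + 1)
      have h2 := Finset.sum_range_succ
        (fun j => j * stirling2 n j * k.descFactorial j) (n + 1)
      simp only [stirling2_eq_zero_of_lt (Nat.lt_succ_self n)] at h2
      rw [h2] at h1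
      simp only [Nat.zero_mul, Nat.mul_zero, Nat.mul_one, Nat.add_zero, Nat.zero_add] at h1
      calc ∑ j ∈ Finset.range (n + 1), stirling2 n j * (j * k.descFactorial j)
          = ∑ j ∈ Finset.range (n + 1), j * stirling2 n j * k.descFactorial j :=
            Finset.sum_congr rfl fun j _ => by ring
        _ = ∑ j ∈ Finset.range (n + 1),
              (j + 1) * stirling2 n (j + 1) * k.descFactorial (j + 1) := h1
        _ = _ := Finset.sum_congr rfl fun j _ => by ring
    calc k ^ (n + 1) = k * k ^ n := by ring
      _ = ∑ j ∈ Finset.range (n + 1), stirling2 n j *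
            (k.descFactorial (j + 1) + j * k.descFactorial j) := by
          rw [ih, Finset.mul_sum]
          refine Finset.sum_congr rfl fun j _ => ?_
          rw [← mul_descFactorial]; ring
      _ = (∑ j ∈ Finset.range (n + 1), stirling2 n j * k.descFactorial (j + 1)) +
            ∑ j ∈ Finset.range (n + 1), stirling2 n j * (j * k.descFactorial j) := by
          rw [← Finset.sum_add_distrib]
          exact Finset.sum_congr rfl fun j _ => by ring
      _ = (∑ j ∈ Finset.range (n + 1), stirling2 n j * k.descFactorial (j + 1)) +
            ∑ j ∈ Finset.range (n + 1),
              ((j + 1) * stirling2 n (j + 1)) * k.descFactorial (j + 1) := by rw [key]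
      _ = ∑ j ∈ Finset.range (n + 1),
            ((j + 1) * stirling2 n (j + 1) + stirling2 n j) * k.descFactorial (j + 1) := by
          rw [← Finset.sum_add_distrib]
          exact Finset.sum_congr rfl fun j _ => by ring
      _ = ∑ j ∈ Finset.range (n + 2), stirling2 (n + 1) j * k.descFactorial j := by
          rw [Finset.sum_range_succ' (fun j => stirling2 (n + 1) j * k.descFactorial j) (n + 1)]
          simp [stirling2]

lemma desc_mul_choose {j k W : ℕ} (hjk : j ≤ k) :
    k.descFactorial j * W.choose k = W.descFactorial j * (W - j).choose (k - j) := by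
  rcases le_or_gt k W with h | h
  · rw [Nat.descFactorial_eq_factorial_mul_choose, Nat.descFactorial_eq_factorial_mul_choose,
      Nat.mul_assoc, Nat.mul_assoc, Nat.mul_comm (k.choose j), ← Nat.choose_mul hjk]
  · rw [Nat.choose_eq_zero_of_lt h]
    rcases le_or_gt j W with h2 | h2
    · rw [Nat.choose_eq_zero_of_lt (by omega : W - j < k - j)]
      simp
    · rw [Nat.descFactorial_eq_zero_iff_lt.2 h2]
      simp

/-- The key natural-number identity for a fixed `j`. -/
lemma inner_sum_eq (T m W j : ℕ) (hj : 1 ≤ j) (hjm : j ≤ m) (hjW : j ≤ W) (hWT : W ≤ T) :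
    ∑ k ∈ Finset.Icc 1 m, k.descFactorial j * (W.choose k * (T - W).choose (m - k)) =
      W.descFactorial j * (T - j).choose (m - j) := by
  have h0 : Finset.Icc 1 m = Finset.Ico 1 (m + 1) := by
    ext x; simp [Nat.lt_succ_iff]
  rw [h0]
  have hsplit : Finset.Ico 1 (m + 1) = Finset.Ico 1 j ∪ Finset.Ico j (m + 1) := by
    rw [Finset.Ico_union_Ico_eq_Ico hj (by omega)]
  rw [hsplit, Finset.sum_union (by
    apply Finset.Ico_disjoint_Ico_consecutive)]
  have hz : ∑ k ∈ Finset.Ico 1 j, k.descFactorial j *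
      (W.choose k * (T - W).choose (m - k)) = 0 := by
    apply Finset.sum_eq_zero
    intro k hk
    simp only [Finset.mem_Ico] at hk
    rw [Nat.descFactorial_eq_zero_iff_lt.2 hk.2]
    ring
  rw [hz, Nat.zero_add, Finset.sum_Ico_eq_sum_range]
  have hw : ∀ i ∈ Finset.range (m + 1 - j),
      (j + i).descFactorial j * (W.choose (j + i) * (T - W).choose (m - (j + i))) =
      W.descFactorial j * ((W - j).choose i * (T - W).choose (m - j - i)) := by
    intro i _
    have : m - (j + i) = m - j - i := by omega
    rw [this, ← Nat.mul_assoc, desc_mul_choose (Nat.le_add_right j i),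
      Nat.add_sub_cancel_left, Nat.mul_assoc]
  rw [Finset.sum_congr rfl hw, ← Finset.mul_sum]
  congr 1
  have hV := Nat.add_choose_eq (W - j) (T - W) (m - j)
  rw [Finset.Nat.sum_antidiagonal_eq_sum_range_succ_mk] at hV
  have h1 : W - j + (T - W) = T - j := by omega
  have h2 : m + 1 - j = m - j + 1 := by omega
  rw [h2, ← h1, hV]

theorem per_j (T m W j : ℕ) (hj : 1 ≤ j) (hm : 1 ≤ m) (hmT : m ≤ T) (hWT : W ≤ T) :
    ∑ k ∈ Finset.Icc 1 m, (Nat.descFactorial k j : ℝ) *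
        (Nat.choose W k * Nat.choose (T - W) (m - k) : ℝ) / (Nat.choose T m : ℝ) =
      (Nat.descFactorial W j : ℝ) * (Nat.choose m j : ℝ) / (Nat.choose T j : ℝ) := by
  rcases lt_or_ge m j with hjm | hjm
  · rw [Nat.choose_eq_zero_of_lt hjm]
    rw [Finset.sum_eq_zero]
    · simp
    · intro k hk
      simp only [Finset.mem_Icc] at hk
      rw [Nat.descFactorial_eq_zero_iff_lt.2 (by omega : k < j)]
      simp
  rcases lt_or_ge W j with hjW | hjW
  · rw [Nat.descFactorial_eq_zero_iff_lt.2 hjW]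
    rw [Finset.sum_eq_zero]
    · simp
    · intro k hk
      simp only [Finset.mem_Icc] at hk
      rcases lt_or_ge k j with h | h
      · rw [Nat.descFactorial_eq_zero_iff_lt.2 h]; simp
      · rw [Nat.choose_eq_zero_of_lt (by omega : W < k)]; simp
  -- main case : j ≤ m, j ≤ W
  have hkey := inner_sum_eq T m W j hj hjm hjW hWT
  have hsum : ∑ k ∈ Finset.Icc 1 m, (Nat.descFactorial k j : ℝ) *
      (Nat.choose W k * Nat.choose (T - W) (m - k) : ℝ) =
      (Nat.descFactorial W j : ℝ) * (Nat.choose (T - j) (m - j) : ℝ) := by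
    rw [← Nat.cast_mul]
    rw [← hkey]
    push_cast
    exact Finset.sum_congr rfl fun k _ => by ring
  rw [← Finset.sum_div, hsum]
  have hTm : (0:ℝ) < Nat.choose T m := by
    exact_mod_cast Nat.choose_pos hmT
  have hTj : (0:ℝ) < Nat.choose T j := by
    exact_mod_cast Nat.choose_pos (le_trans hjm hmT)
  have hcm : (Nat.choose T m : ℝ) * Nat.choose m j =
      Nat.choose T j * Nat.choose (T - j) (m - j) := by
    exact_mod_cast congrArg Nat.cast (Nat.choose_mul (n := T) hjm)
  field_simp
  nlinarith [hcm]

/-- The `ℓ`-th moment of the hypergeometric distribution: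
`Σ_{k=1}^{m} k^ℓ·C(W,k)·C(T−W,m−k)/C(T,m) = Σ_{j=1}^{ℓ} S(ℓ,j)·W^{(j)}·C(m,j)/C(T,j)`. -/
theorem hypergeometric_moment (T m W ℓ : ℕ) (hm : 1 ≤ m) (hmT : m ≤ T) (hWT : W ≤ T)
    (hℓ : 1 ≤ ℓ) :
    ∑ k ∈ Finset.Icc 1 m, (k : ℝ) ^ ℓ *
        (Nat.choose W k * Nat.choose (T - W) (m - k) : ℝ) / (Nat.choose T m : ℝ) =
      ∑ j ∈ Finset.Icc 1 ℓ, (stirling2 ℓ j : ℝ) * (Nat.descFactorial W j : ℝ) *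
        (Nat.choose m j : ℝ) / (Nat.choose T j : ℝ) := by
  have hpow : ∀ k : ℕ, (k : ℝ) ^ ℓ =
      ∑ j ∈ Finset.Icc 1 ℓ, (stirling2 ℓ j : ℝ) * (Nat.descFactorial k j : ℝ) := by
    intro k
    have h := pow_eq_sum_stirling k ℓ
    have hI : Finset.range (ℓ + 1) = insert 0 (Finset.Icc 1 ℓ) := by
      ext x; simp [Nat.lt_succ_iff]; omega
    rw [hI, Finset.sum_insert (by simp)] at h
    have h0 : stirling2 ℓ 0 = 0 := by
      cases ℓ with
      | zero => omega
      | succ n => rfl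
    rw [h0] at h
    simp only [Nat.zero_mul, Nat.zero_add] at h
    calc (k : ℝ) ^ ℓ = ((k ^ ℓ : ℕ) : ℝ) := by push_cast; ring
      _ = _ := by rw [h]; push_cast; ring
  calc ∑ k ∈ Finset.Icc 1 m, (k : ℝ) ^ ℓ *
        (Nat.choose W k * Nat.choose (T - W) (m - k) : ℝ) / (Nat.choose T m : ℝ)
      = ∑ k ∈ Finset.Icc 1 m, ∑ j ∈ Finset.Icc 1 ℓ, (stirling2 ℓ j : ℝ) *
          ((Nat.descFactorial k j : ℝ) *
          (Nat.choose W k * Nat.choose (T - W) (m - k) : ℝ) / (Nat.choose T m : ℝ)) := by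
        refine Finset.sum_congr rfl fun k _ => ?_
        rw [hpow k, Finset.sum_mul, Finset.sum_div]
        refine Finset.sum_congr rfl fun j _ => ?_
        ring
    _ = ∑ j ∈ Finset.Icc 1 ℓ, (stirling2 ℓ j : ℝ) *
          ∑ k ∈ Finset.Icc 1 m, (Nat.descFactorial k j : ℝ) *
          (Nat.choose W k * Nat.choose (T - W) (m - k) : ℝ) / (Nat.choose T m : ℝ) := by
        rw [Finset.sum_comm]
        refine Finset.sum_congr rfl fun j _ => ?_
        rw [Finset.mul_sum]
    _ = _ := by
        refine Finset.sum_congr rfl fun j hj => ?_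
        simp only [Finset.mem_Icc] at hj
        rw [per_j T m W j hj.1 hm hmT hWT]
        ring
end

section
/- Fix integers m ≥ 1, c ≥ 1, T_0 ≥ 1 and s ≥ 1. The function p(x) := (s!/(mc)^s) · Σ_{ℓ=0}^{s} c^ℓ·C(m,ℓ)·C(x·mc + T_0 − ℓ, s−ℓ) (where C(y, r) := y(y−1)···(y−r+1)/r! is a polynomial in y) is a monic polynomial of degree s in x, and its coefficient of x^{s−1}, i.e. the sum Σ_{ℓ=1}^{s} λ_{ℓ,s} of the negatives of its roots, equals (s·T_0 − C(s,2))/(mc) + s. -/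
open Polynomial


lemma natDeg_prod_linear_le (a : ℝ) (b : ℕ → ℝ) (r : ℕ) :
    (∏ i ∈ Finset.range r, (C a * X + C (b i))).natDegree ≤ r := by
  have h1 : ∑ i ∈ Finset.range r, (C a * X + C (b i)).natDegree
      ≤ ∑ _i ∈ Finset.range r, 1 :=
    Finset.sum_le_sum fun i _ => Polynomial.natDegree_linear_le
  have h2 : ∑ _i ∈ Finset.range r, 1 = r := by simp
  exact le_trans (Polynomial.natDegree_prod_le _ _) (by omega)

lemma coeff_mul_linear (p : Polynomial ℝ) (a b : ℝ) (k : ℕ) :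
    (p * (C a * X + C b)).coeff (k+1) = a * p.coeff k + b * p.coeff (k+1) := by
  have h : p * (C a * X + C b) = C a * (p * X) + C b * p := by ring
  rw [h, coeff_add, coeff_C_mul, coeff_C_mul, coeff_mul_X]

lemma coeff_prod_linear_top (a : ℝ) (b : ℕ → ℝ) :
    ∀ r, (∏ i ∈ Finset.range r, (C a * X + C (b i))).coeff r = a ^ r := by
  intro r
  induction r with
  | zero => simp
  | succ r ih =>
    rw [Finset.prod_range_succ, coeff_mul_linear, ih,
      coeff_eq_zero_of_natDegree_lt (lt_of_le_of_lt (natDeg_prod_linear_le a b r) (Nat.lt_succ_self r))]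
    ring

lemma coeff_prod_linear_sub (a : ℝ) (b : ℕ → ℝ) :
    ∀ r, (∏ i ∈ Finset.range (r+1), (C a * X + C (b i))).coeff r
      = a ^ r * ∑ i ∈ Finset.range (r+1), b i := by
  intro r
  induction r with
  | zero => simp
  | succ r ih =>
    rw [Finset.prod_range_succ, coeff_mul_linear, ih, coeff_prod_linear_top]
    conv_rhs => rw [Finset.sum_range_succ]
    ring


/-- The polynomial `p(x) = (s!/(mc)^s)·Σ_{ℓ=0}^{s} c^ℓ·C(m,ℓ)·C(x·mc + T₀ − ℓ, s−ℓ)`,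
where `C(y,r) = y(y−1)⋯(y−r+1)/r!` is read as a polynomial in `y`. -/
noncomputable def lambdaPoly (m c T0 s : ℕ) : Polynomial ℝ :=
  Polynomial.C ((Nat.factorial s : ℝ) / ((m : ℝ) * c) ^ s) *
    ∑ ℓ ∈ Finset.range (s + 1),
      Polynomial.C ((c : ℝ) ^ ℓ * (Nat.choose m ℓ : ℝ) / (Nat.factorial (s - ℓ) : ℝ)) *
        ∏ i ∈ Finset.range (s - ℓ),
          (Polynomial.C ((m : ℝ) * c) * Polynomial.X +
            Polynomial.C ((T0 : ℝ) - (ℓ : ℝ) - (i : ℝ)))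

/-- `p` is a monic polynomial of degree `s` in `x`, and its coefficient of `x^{s−1}`
(i.e. the sum `Σ_{ℓ=1}^{s} λ_{ℓ,s}` of the negatives of its roots) equals
`(s·T₀ − C(s,2))/(mc) + s`. -/
theorem lambdaPoly_monic_and_rootSum (m c T0 s : ℕ) (hm : 1 ≤ m) (hc : 1 ≤ c)
    (hT0 : 1 ≤ T0) (hs : 1 ≤ s) :
    (lambdaPoly m c T0 s).Monic ∧ (lambdaPoly m c T0 s).natDegree = s ∧
      (lambdaPoly m c T0 s).coeff (s - 1) =
        ((s : ℝ) * T0 - (Nat.choose s 2 : ℝ)) / ((m : ℝ) * c) + s := by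
  obtain ⟨t, rfl⟩ : ∃ t, s = t + 1 := ⟨s - 1, (Nat.succ_pred_eq_of_pos hs).symm⟩
  have hm0 : (m : ℝ) ≠ 0 := by positivity
  have hc0 : (c : ℝ) ≠ 0 := by positivity
  have ha : (m : ℝ) * c ≠ 0 := mul_ne_zero hm0 hc0
  have hfac : ∀ n : ℕ, (Nat.factorial n : ℝ) ≠ 0 := fun n => by
    exact_mod_cast (Nat.factorial_pos n).ne'
  set a : ℝ := (m : ℝ) * c with ha_def
  -- coefficient extraction
  have hcoeff : ∀ n : ℕ, (lambdaPoly m c T0 (t+1)).coeff n =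
      ((Nat.factorial (t+1) : ℝ) / a ^ (t+1)) *
      ∑ ℓ ∈ Finset.range (t + 2),
        ((c : ℝ) ^ ℓ * (Nat.choose m ℓ : ℝ) / (Nat.factorial (t + 1 - ℓ) : ℝ)) *
        (∏ i ∈ Finset.range (t + 1 - ℓ),
          (C a * X + C ((T0 : ℝ) - (ℓ : ℝ) - (i : ℝ)))).coeff n := by
    intro n
    rw [lambdaPoly, coeff_C_mul, finset_sum_coeff]
    congr 1
    refine Finset.sum_congr rfl fun ℓ _ => by rw [coeff_C_mul]
  -- vanishing of low-degree terms
  have hvanish : ∀ ℓ n : ℕ, t + 1 - ℓ < n →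
      (∏ i ∈ Finset.range (t + 1 - ℓ),
        (C a * X + C ((T0 : ℝ) - (ℓ : ℝ) - (i : ℝ)))).coeff n = 0 := fun ℓ n h =>
    coeff_eq_zero_of_natDegree_lt (lt_of_le_of_lt (natDeg_prod_linear_le _ _ _) h)
  -- top coefficient is 1
  have htop : (lambdaPoly m c T0 (t+1)).coeff (t+1) = 1 := by
    rw [hcoeff, Finset.sum_range_succ']
    have hz : ∀ ℓ ∈ Finset.range (t+1),
        ((c : ℝ) ^ (ℓ+1) * (Nat.choose m (ℓ+1) : ℝ) / (Nat.factorial (t + 1 - (ℓ+1)) : ℝ)) *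
        (∏ i ∈ Finset.range (t + 1 - (ℓ+1)),
          (C a * X + C ((T0 : ℝ) - ((ℓ+1 : ℕ) : ℝ) - (i : ℝ)))).coeff (t+1) = 0 := by
      intro ℓ hℓ
      have hℓ' := Finset.mem_range.mp hℓ
      rw [hvanish (ℓ+1) (t+1) (by omega), mul_zero]
    rw [Finset.sum_eq_zero hz, zero_add]
    simp only [Nat.sub_zero, Nat.cast_zero, Nat.choose_zero_right, pow_zero, Nat.cast_one]
    rw [coeff_prod_linear_top]
    field_simp
  -- degree
  have hdegle : (lambdaPoly m c T0 (t+1)).natDegree ≤ t + 1 := by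
    rw [lambdaPoly]
    refine le_trans (natDegree_mul_le) ?_
    rw [natDegree_C, zero_add]
    refine Polynomial.natDegree_sum_le_of_forall_le _ _ fun ℓ hℓ => ?_
    refine le_trans natDegree_mul_le ?_
    rw [natDegree_C, zero_add]
    exact le_trans (natDeg_prod_linear_le _ _ _) (by omega)
  have hdeg : (lambdaPoly m c T0 (t+1)).natDegree = t + 1 := by
    refine le_antisymm hdegle (le_natDegree_of_ne_zero ?_)
    rw [htop]; exact one_ne_zero
  have hmonic : (lambdaPoly m c T0 (t+1)).Monic := by
    rw [Monic, leadingCoeff, hdeg, htop]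
  refine ⟨hmonic, hdeg, ?_⟩
  -- coefficient at s - 1 = t
  have hts : t + 1 - 1 = t := rfl
  rw [hts, hcoeff, Finset.sum_range_succ', Finset.sum_range_succ']
  have hz : ∀ ℓ ∈ Finset.range t,
      ((c : ℝ) ^ (ℓ+1+1) * (Nat.choose m (ℓ+1+1) : ℝ) / (Nat.factorial (t + 1 - (ℓ+1+1)) : ℝ)) *
      (∏ i ∈ Finset.range (t + 1 - (ℓ+1+1)),
        (C a * X + C ((T0 : ℝ) - ((ℓ+1+1 : ℕ) : ℝ) - (i : ℝ)))).coeff t = 0 := by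
    intro ℓ hℓ
    have hℓ' := Finset.mem_range.mp hℓ
    rw [hvanish (ℓ+1+1) t (by omega), mul_zero]
  rw [Finset.sum_eq_zero hz, zero_add]
  have h10 : t + 1 - (0 + 1) = t := by omega
  have h00 : t + 1 - 0 = t + 1 := rfl
  rw [h10, h00, coeff_prod_linear_top, coeff_prod_linear_sub]
  -- arithmetic
  have hsum : ∑ i ∈ Finset.range (t + 1), ((T0 : ℝ) - ((0:ℕ) : ℝ) - (i : ℝ))
      = (t + 1 : ℝ) * T0 - (t : ℝ) * (t + 1) / 2 := by
    have hg : (∑ i ∈ Finset.range (t+1), (i : ℝ)) = (t : ℝ) * (t + 1) / 2 := by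
      have := Finset.sum_range_id_mul_two (t + 1)
      have h' : ((∑ i ∈ Finset.range (t+1), i : ℕ) : ℝ) * 2 = ((t + 1 : ℕ) : ℝ) * (t : ℝ) := by
        exact_mod_cast congrArg (fun x : ℕ => (x : ℝ)) this
      push_cast at h' ⊢
      linarith
    rw [Finset.sum_sub_distrib, Finset.sum_sub_distrib, Finset.sum_const, Finset.sum_const, hg]
    simp only [Finset.card_range, nsmul_eq_mul]
    push_cast
    ring
  have hch : ((t+1).choose 2 : ℝ) = (t : ℝ) * (t + 1) / 2 := by
    rw [Nat.cast_choose_two]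
    push_cast
    ring
  rw [hsum, hch]
  have hfs : (Nat.factorial (t+1) : ℝ) = (t + 1 : ℝ) * (Nat.factorial t : ℝ) := by
    rw [Nat.factorial_succ]; push_cast; ring
  simp only [Nat.choose_zero_right, Nat.choose_one_right, pow_zero, pow_one, Nat.cast_one,
    Nat.cast_zero]
  rw [hfs]
  have hft : (Nat.factorial t : ℝ) ≠ 0 := hfac t
  have ht1 : (t : ℝ) + 1 ≠ 0 := by positivity
  field_simp
  simp only [Nat.choose_one_right, zero_add]
  rw [ha_def]
  push_cast
  ring
end
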